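/- arXiv:2007.11288 — 4 statements merged into one kernel-verified Lean document; each statement's English description precedes it below -/
import Mathlib

section
/- Let σ = {σ_1, σ_2, σ_3} be the partition of the primes with σ_1 = {2,3}, σ_2 = {5}, and σ_3 all primes other than 2, 3 and 5. Let A be the nonabelian group of order 6 and G = A × C_5. Then G is a T-group, but G is not a T_σ-group; indeed, a subgroup of G of order 2 is σ-subnormal in G but not normal in G. -/
/-- A group is σ-primary if all primes dividing its order lie in a single member of σ. -/
def IsSigmaPrimary {ι : Type*} (σ : ι → Set ℕ) (G : Type*) [Group G] : Prop :=
  ∃ i, ∀ p : ℕ, p.Prime → p ∣ Nat.card G → p ∈ σ i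

/-- A subgroup `H` of `G` is σ-subnormal if there is a chain from `H` to `G` where each
step is either normal or the quotient by the normal core is σ-primary. -/
def IsSigmaSubnormal {ι : Type*} (σ : ι → Set ℕ) {G : Type*} [Group G] (H : Subgroup G) :
    Prop :=
  ∃ (n : ℕ) (f : Fin (n + 1) → Subgroup G),
    f 0 = H ∧ f (Fin.last n) = ⊤ ∧
    ∀ k : Fin n, f k.castSucc ≤ f k.succ ∧
      (((f k.castSucc).subgroupOf (f k.succ)).Normal ∨
        IsSigmaPrimary σ
          (↥(f k.succ) ⧸ ((f k.castSucc).subgroupOf (f k.succ)).normalCore))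

/-- `G` is a `T_σ`-group if every σ-subnormal subgroup of `G` is normal. -/
def IsTSigmaGroup {ι : Type*} (σ : ι → Set ℕ) (G : Type*) [Group G] : Prop :=
  ∀ H : Subgroup G, IsSigmaSubnormal σ H → H.Normal

/-- Hall π-subgroup: every prime dividing `|H|` is in π, no prime dividing `|G : H|` is in π. -/
def IsHallPiSubgroup {G : Type*} [Group G] (π : Set ℕ) (H : Subgroup G) : Prop :=
  (∀ p : ℕ, p.Prime → p ∣ Nat.card H → p ∈ π) ∧
  (∀ p : ℕ, p.Prime → p ∣ H.index → p ∉ π)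

/-- `G` satisfies the condition `R_{σᵢ}` (for the set of primes `σi`) if every subgroup of
every Hall π-subgroup `H` of `G` with `π ⊆ σi` is normal in the normalizer of `H`. -/
def ConditionR (σi : Set ℕ) (G : Type*) [Group G] : Prop :=
  ∀ π : Set ℕ, π ⊆ σi → ∀ H : Subgroup G, IsHallPiSubgroup π H →
    ∀ K : Subgroup G, K ≤ H → (K.subgroupOf (Subgroup.normalizer (H : Set G))).Normal

/-- `G` is σ-nilpotent: `G` is an (internal) direct product of σ-primary subgroups. -/
def IsSigmaNilpotent {ι : Type*} (σ : ι → Set ℕ) (G : Type*) [Group G] : Prop :=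
  ∃ (n : ℕ) (H : Fin n → Subgroup G),
    (∀ k, (H k).Normal) ∧ (∀ k, IsSigmaPrimary σ (H k)) ∧
    iSupIndep H ∧ iSup H = ⊤

/-- The σ-nilpotent residual of `G`: the intersection of all normal subgroups with
σ-nilpotent quotient. -/
def sigmaNilpotentResidual {ι : Type*} (σ : ι → Set ℕ) (G : Type*) [Group G] : Subgroup G :=
  ⨅ N ∈ {N : Subgroup G | N.Normal ∧ IsSigmaNilpotent σ (G ⧸ N.normalCore)}, N

/-- `K < H` is a chief factor of `G`. -/
def IsChiefFactor {G : Type*} [Group G] (K H : Subgroup G) : Prop :=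
  K.Normal ∧ H.Normal ∧ K < H ∧
    ∀ N : Subgroup G, N.Normal → K ≤ N → N ≤ H → N = K ∨ N = H

/-- `G` is σ-soluble if every chief factor of `G` is σ-primary. -/
def IsSigmaSolvable {ι : Type*} (σ : ι → Set ℕ) (G : Type*) [Group G] : Prop :=
  ∀ K H : Subgroup G, IsChiefFactor K H →
    IsSigmaPrimary σ (↥H ⧸ (K.subgroupOf H).normalCore)

/-- A Dedekind group: every subgroup is normal. -/
def IsDedekindGroup (G : Type*) [Group G] : Prop := ∀ H : Subgroup G, H.Normal

/-- `O_{πs}(D)`: the largest normal subgroup of `D` whose order involves only primes of `πs`,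
regarded as a subgroup of `G`. -/
def sigmaCoreIn {G : Type*} [Group G] (πs : Set ℕ) (D : Subgroup G) : Subgroup G :=
  ⨆ K ∈ {K : Subgroup G | K ≤ D ∧ (K.subgroupOf D).Normal ∧
      ∀ p : ℕ, p.Prime → p ∣ Nat.card K → p ∈ πs}, K

/-- A subnormal subgroup. -/
def IsSubnormal {G : Type*} [Group G] (H : Subgroup G) : Prop :=
  ∃ (n : ℕ) (f : Fin (n + 1) → Subgroup G),
    f 0 = H ∧ f (Fin.last n) = ⊤ ∧
    ∀ k : Fin n, f k.castSucc ≤ f k.succ ∧ ((f k.castSucc).subgroupOf (f k.succ)).Normal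

/-- A `T`-group: every subnormal subgroup is normal. -/
def IsTGroup (G : Type*) [Group G] : Prop :=
  ∀ H : Subgroup G, IsSubnormal H → H.Normal

/-- The nilpotent residual of `G`. -/
def nilpotentResidual (G : Type*) [Group G] : Subgroup G :=
  ⨅ N ∈ {N : Subgroup G | N.Normal ∧ Group.IsNilpotent (G ⧸ N.normalCore)}, N

/-- The statement (3) from the main theorem: (i) `G = D ⋊ M` with `D` an abelian Hall
subgroup of odd order and `M` Dedekind; (ii) every subgroup of `D` is normal in `G`;
(iii) `O_{σᵢ}(D)` has a normal complement in some Hall `σᵢ`-subgroup of `G` for all `i`. -/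
def SatisfiesGaschuetzSigma {ι : Type*} (σ : ι → Set ℕ) (G : Type*) [Group G] : Prop :=
  (sigmaNilpotentResidual σ G).Normal ∧
  (∃ M : Subgroup G, (sigmaNilpotentResidual σ G).IsComplement' M ∧ IsDedekindGroup M) ∧
  Nat.Coprime (Nat.card (sigmaNilpotentResidual σ G)) (sigmaNilpotentResidual σ G).index ∧
  Odd (Nat.card (sigmaNilpotentResidual σ G)) ∧
  (∀ x y : (sigmaNilpotentResidual σ G), x * y = y * x) ∧
  (∀ K : Subgroup G, K ≤ sigmaNilpotentResidual σ G → K.Normal) ∧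
  (∀ i, ∃ H : Subgroup G, IsHallPiSubgroup (σ i) H ∧
    sigmaCoreIn (σ i) (sigmaNilpotentResidual σ G) ≤ H ∧
    ∃ S : Subgroup G, S ≤ H ∧ (S.subgroupOf H).Normal ∧
      sigmaCoreIn (σ i) (sigmaNilpotentResidual σ G) ⊓ S = ⊥ ∧
      sigmaCoreIn (σ i) (sigmaNilpotentResidual σ G) ⊔ S = H)

instance sigmaNilpotentResidual_normal {ι : Type*} (σ : ι → Set ℕ) (G : Type*) [Group G] :
    (sigmaNilpotentResidual σ G).Normal := by
  constructor
  intro x hx g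
  simp only [sigmaNilpotentResidual, Subgroup.mem_iInf, Set.mem_setOf_eq] at hx ⊢
  intro N hN
  exact hN.1.conj_mem x (hx N hN) g

instance nilpotentResidual_normal (G : Type*) [Group G] : (nilpotentResidual G).Normal := by
  constructor
  intro x hx g
  simp only [nilpotentResidual, Subgroup.mem_iInf, Set.mem_setOf_eq] at hx ⊢
  intro N hN
  exact hN.1.conj_mem x (hx N hN) g

/-- The partition `σ = {σ₁, σ₂, σ₃}` where `σ₁ = {2,3}`, `σ₂ = {5}` and `σ₃` consists of
all primes other than `2`, `3` and `5`. -/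
def sigma6 : Fin 3 → Set ℕ :=
  ![{2, 3}, {5}, {p : ℕ | p.Prime ∧ p ∉ ({2, 3, 5} : Set ℕ)}]

section AuxLemmas

open Subgroup

variable {G₀ : Type*} [Group G₀]

lemma aux_eq_of_le_of_card_le {H K : Subgroup G₀} (hK : (K : Set G₀).Finite) (h : H ≤ K)
    (hc : Nat.card K ≤ Nat.card H) : H = K := by
  apply SetLike.coe_injective
  apply Set.eq_of_subset_of_ncard_le h ?_ hK
  rwa [← Nat.card_coe_set_eq, ← Nat.card_coe_set_eq]

lemma aux_le_of_coprime [Finite G₀] {N K : Subgroup G₀} (hN : N.Normal)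
    (h : Nat.Coprime (Nat.card K) N.index) : K ≤ N := by
  haveI := hN
  intro x hx
  have hxo : orderOf x ∣ Nat.card K := Subgroup.orderOf_dvd_natCard K hx
  have h1 : orderOf (QuotientGroup.mk' N x) ∣ Nat.card K :=
    (orderOf_map_dvd (QuotientGroup.mk' N) x).trans hxo
  have h2 : orderOf (QuotientGroup.mk' N x) ∣ N.index := orderOf_dvd_natCard _
  have h3 : orderOf (QuotientGroup.mk' N x) = 1 :=
    Nat.dvd_one.mp (h ▸ Nat.dvd_gcd h1 h2)
  have h4 := orderOf_eq_one_iff.mp h3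
  exact (QuotientGroup.eq_one_iff x).mp h4

lemma aux_normal_of_index_two {P : Subgroup G₀} (h : P.index = 2) : P.Normal := by
  constructor
  intro p hp g
  rw [mul_assoc, Subgroup.mul_mem_iff_of_index_two h, Subgroup.mul_mem_iff_of_index_two h]
  simp [hp]

lemma aux_mem_zpowers_iff_sq {g x : G₀} (hg : g ^ 2 = 1) :
    x ∈ Subgroup.zpowers g ↔ x = 1 ∨ x = g := by
  constructor
  · intro hx
    obtain ⟨k, rfl⟩ := Subgroup.mem_zpowers_iff.mp hx
    have h2 : g ^ (2 : ℤ) = 1 := by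
      rw [show (2 : ℤ) = ((2 : ℕ) : ℤ) by norm_num, zpow_natCast, hg]
    have hk : g ^ k = g ^ (k % 2) := by
      conv_lhs => rw [← Int.emod_add_mul_ediv k 2]
      rw [zpow_add, zpow_mul, h2, one_zpow, mul_one]
    rcases Int.emod_two_eq_zero_or_one k with h | h <;> rw [hk, h] <;> simp
  · rintro (rfl | rfl)
    · exact one_mem _
    · exact Subgroup.mem_zpowers _

lemma aux_not_subnormal {H M : Subgroup G₀} (hHM : H ≤ M) (hM : M ≠ ⊤)
    (hstep : ∀ K : Subgroup G₀, H ≤ K → K ≤ M → Subgroup.normalizer (K : Set G₀) ≤ M) :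
    ¬ _root_.IsSubnormal H := by
  rintro ⟨n, f, hf0, hflast, hchain⟩
  have key : ∀ k : Fin (n + 1), H ≤ f k ∧ f k ≤ M := by
    intro k
    induction k using Fin.induction with
    | zero => rw [hf0]; exact ⟨le_rfl, hHM⟩
    | succ i ih =>
      obtain ⟨hle, hnorm⟩ := hchain i
      haveI := hnorm
      have h1 : f i.succ ≤ Subgroup.normalizer (f i.castSucc : Set G₀) :=
        Subgroup.le_normalizer_of_normal_subgroupOf hle
      exact ⟨ih.1.trans hle, h1.trans (hstep _ ih.1 ih.2)⟩
  exact hM (top_le_iff.mp (hflast ▸ (key (Fin.last n)).2))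

lemma aux_divisor10 {d : ℕ} (h1 : d ∣ 10) (h2 : 2 ∣ d) : d = 2 ∨ d = 10 := by
  have h3 := Nat.le_of_dvd (by norm_num) h1
  have h4 := Nat.pos_of_dvd_of_pos h1 (by norm_num)
  interval_cases d <;> omega

lemma aux_divisor30 {d : ℕ} (h1 : d ∣ 30) :
    d = 1 ∨ d = 2 ∨ d = 3 ∨ d = 5 ∨ d = 6 ∨ d = 10 ∨ d = 15 ∨ d = 30 := by
  have h3 := Nat.le_of_dvd (by norm_num) h1
  have h4 := Nat.pos_of_dvd_of_pos h1 (by norm_num)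
  interval_cases d <;> omega

lemma aux_card_prod {A' B' : Type*} [Group A'] [Group B'] (H : Subgroup A') (K : Subgroup B') :
    Nat.card (H.prod K) = Nat.card H * Nat.card K := by
  rw [Nat.card_congr (H.prodEquiv K).toEquiv, Nat.card_prod]

end AuxLemmas

lemma aux_divisor6_even {d : ℕ} (h1 : d ∣ 6) (h2 : 2 ∣ d) : d = 2 ∨ d = 6 := by
  have h3 := Nat.le_of_dvd (by norm_num) h1
  have h4 := Nat.pos_of_dvd_of_pos h1 (by norm_num)
  interval_cases d <;> omega

/-- Let `A` be the nonabelian group of order `6` and `G = A × C₅`. Then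
`G` is a `T`-group but not a `T_σ`-group for the partition `sigma6`: some subgroup of `G`
of order `2` is σ-subnormal in `G` but not normal in `G`. -/
theorem statement_6 (A : Type*) [Group A] [Finite A]
    (hA : Nat.card A = 6) (hnab : ¬ ∀ x y : A, x * y = y * x) :
    IsTGroup (A × Multiplicative (ZMod 5)) ∧
    ¬ IsTSigmaGroup sigma6 (A × Multiplicative (ZMod 5)) ∧
    ∃ H : Subgroup (A × Multiplicative (ZMod 5)),
      Nat.card H = 2 ∧ IsSigmaSubnormal sigma6 H ∧ ¬ H.Normal := by
  
  haveI : Fact (Nat.Prime 2) := ⟨by norm_num⟩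
  haveI : Fact (Nat.Prime 3) := ⟨by norm_num⟩
  haveI : Fact (Nat.Prime 5) := ⟨by norm_num⟩
  have hC : Nat.card (Multiplicative (ZMod 5)) = 5 := by
    rw [Nat.card_eq_fintype_card]; rfl
  have hG : Nat.card (A × Multiplicative (ZMod 5)) = 30 := by
    rw [Nat.card_prod, hA, hC]
  have hfive : ∀ c : Multiplicative (ZMod 5), c ^ 5 = 1 := by
    intro c; have := pow_card_eq_one' (x := c); rwa [hC] at this
  have hsix : ∀ a : A, a ^ 6 = 1 := by
    intro a; have := pow_card_eq_one' (x := a); rwa [hA] at this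
  -- no nontrivial central element of `A`
  have h_center : ∀ v : A, (∀ x : A, x * v = v * x) → v = 1 := by
    intro v hv
    by_contra hv1
    have hvc : v ∈ Subgroup.center A := Subgroup.mem_center_iff.mpr hv
    have hZne : Subgroup.center A ≠ ⊥ := by
      intro hbot
      exact hv1 (Subgroup.mem_bot.mp (hbot ▸ hvc))
    have hZ1 : Nat.card (Subgroup.center A) ≠ 1 :=
      fun hh => hZne (Subgroup.card_eq_one.mp hh)
    have hZpos : 0 < Nat.card (Subgroup.center A) := Nat.card_pos
    have hquot : 6 = Nat.card (A ⧸ Subgroup.center A) * Nat.card (Subgroup.center A) := by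
      rw [← hA]; exact Subgroup.card_eq_card_quotient_mul_card_subgroup _
    have h2 : 2 ≤ Nat.card (Subgroup.center A) := by omega
    have hmul : Nat.card (A ⧸ Subgroup.center A) * 2 ≤
        Nat.card (A ⧸ Subgroup.center A) * Nat.card (Subgroup.center A) :=
      Nat.mul_le_mul_left _ h2
    rw [← hquot] at hmul
    have hqpos : 0 < Nat.card (A ⧸ Subgroup.center A) := by
      rcases Nat.eq_zero_or_pos (Nat.card (A ⧸ Subgroup.center A)) with h0 | h0
      · rw [h0] at hquot; omega
      · exact h0
    have hq : Nat.card (A ⧸ Subgroup.center A) = 1 ∨ Nat.card (A ⧸ Subgroup.center A) = 2 ∨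
        Nat.card (A ⧸ Subgroup.center A) = 3 := by omega
    have hcyc : IsCyclic (A ⧸ Subgroup.center A) := by
      rcases hq with h | h | h
      · haveI : Subsingleton (A ⧸ Subgroup.center A) := (Nat.card_eq_one_iff_unique.mp h).1
        infer_instance
      · exact isCyclic_of_prime_card h
      · exact isCyclic_of_prime_card h
    exact hnab (commutative_of_cyclic_center_quotient (QuotientGroup.mk' (Subgroup.center A))
      (QuotientGroup.ker_mk' (Subgroup.center A)).le)
  -- the centralizer of an involution is the subgroup it generates
  have h_centralizer : ∀ u : A, u ^ 2 = 1 → u ≠ 1 →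
      Subgroup.centralizer {u} = Subgroup.zpowers u := by
    intro u hu2 hu1
    have horder : orderOf u = 2 := orderOf_eq_prime hu2 hu1
    have hz : Subgroup.zpowers u ≤ Subgroup.centralizer {u} := by
      intro x hx
      obtain ⟨k, rfl⟩ := Subgroup.mem_zpowers_iff.mp hx
      rw [Subgroup.mem_centralizer_iff]
      intro g hg
      rw [Set.mem_singleton_iff] at hg
      rw [hg]
      exact ((Commute.refl u).zpow_right k).eq
    have hcard2 : Nat.card (Subgroup.zpowers u) = 2 := by rw [Nat.card_zpowers, horder]
    have hdvd6 : Nat.card (Subgroup.centralizer ({u} : Set A)) ∣ 6 :=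
      hA ▸ Subgroup.card_subgroup_dvd_card _
    have h2dvd : 2 ∣ Nat.card (Subgroup.centralizer ({u} : Set A)) :=
      hcard2 ▸ Subgroup.card_dvd_of_le hz
    rcases aux_divisor6_even hdvd6 h2dvd with h2 | h6
    · exact (aux_eq_of_le_of_card_le (Set.toFinite _) hz (le_of_eq (by rw [h2, hcard2]))).symm
    · exfalso
      have htop : Subgroup.centralizer ({u} : Set A) = (⊤ : Subgroup A) :=
        aux_eq_of_le_of_card_le (Set.toFinite _) le_top
          (le_of_eq (by rw [Subgroup.card_top, hA, h6]))
      have hcomm : ∀ x : A, x * u = u * x := by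
        intro x
        have hx : x ∈ Subgroup.centralizer ({u} : Set A) := htop ▸ Subgroup.mem_top x
        exact (Subgroup.mem_centralizer_iff.mp hx u (Set.mem_singleton u)).symm
      exact hu1 (h_center u hcomm)
  -- conjugation trapping lemma in `A`
  have h_conj : ∀ u x : A, u ^ 2 = 1 → u ≠ 1 →
      x * u * x⁻¹ ∈ Subgroup.zpowers u → x ∈ Subgroup.zpowers u := by
    intro u x hu2 hu1 h
    rw [aux_mem_zpowers_iff_sq hu2] at h
    rcases h with h | h
    · exact absurd (by rwa [mul_inv_eq_one, mul_eq_left] at h) hu1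
    · rw [← h_centralizer u hu2 hu1, Subgroup.mem_centralizer_iff]
      intro g hg
      rw [Set.mem_singleton_iff] at hg
      rw [hg]
      rw [mul_inv_eq_iff_eq_mul] at h
      exact h.symm
  have hpair2 : ∀ u : A, u ^ 2 = 1 →
      ((u, (1 : Multiplicative (ZMod 5))) : A × Multiplicative (ZMod 5)) ^ 2 = 1 := by
    intro u hu2
    have : ((u, (1 : Multiplicative (ZMod 5))) : A × Multiplicative (ZMod 5)) ^ 2
        = (u ^ 2, (1 : Multiplicative (ZMod 5)) ^ 2) := rfl
    rw [this, hu2, one_pow]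
    rfl
  have h_norm_Mu : ∀ u : A, u ^ 2 = 1 → u ≠ 1 →
      Subgroup.normalizer (((Subgroup.zpowers u).prod (⊤ : Subgroup (Multiplicative (ZMod 5)))) : Set (A × Multiplicative (ZMod 5))) ≤
        (Subgroup.zpowers u).prod ⊤ := by
    intro u hu2 hu1 g hg
    rw [Subgroup.mem_normalizer_iff] at hg
    have h1 := (hg (u, 1)).mp (Subgroup.mem_prod.mpr ⟨Subgroup.mem_zpowers u, Subgroup.mem_top _⟩)
    have hfst : g.1 * u * g.1⁻¹ ∈ Subgroup.zpowers u := by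
      have := (Subgroup.mem_prod.mp h1).1
      simpa using this
    exact Subgroup.mem_prod.mpr ⟨h_conj u g.1 hu2 hu1 hfst, Subgroup.mem_top _⟩
  have h_norm_Hu : ∀ u : A, u ^ 2 = 1 → u ≠ 1 →
      Subgroup.normalizer ((Subgroup.zpowers ((u, 1) : A × Multiplicative (ZMod 5))) : Set (A × Multiplicative (ZMod 5))) ≤
        (Subgroup.zpowers u).prod ⊤ := by
    intro u hu2 hu1 g hg
    rw [Subgroup.mem_normalizer_iff] at hg
    have h1 := (hg (u, 1)).mp (Subgroup.mem_zpowers _)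
    rw [aux_mem_zpowers_iff_sq (hpair2 u hu2)] at h1
    have hfst : g.1 * u * g.1⁻¹ ∈ Subgroup.zpowers u := by
      rcases h1 with h | h
      · have := congrArg Prod.fst h
        simp only [Prod.fst_mul, Prod.fst_inv, Prod.fst_one] at this
        rw [this]; exact one_mem _
      · have := congrArg Prod.fst h
        simp only [Prod.fst_mul, Prod.fst_inv] at this
        rw [this]; exact Subgroup.mem_zpowers u
    exact Subgroup.mem_prod.mpr ⟨h_conj u g.1 hu2 hu1 hfst, Subgroup.mem_top _⟩
  have hcard_Mu : ∀ u : A, u ^ 2 = 1 → u ≠ 1 →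
      Nat.card ((Subgroup.zpowers u).prod (⊤ : Subgroup (Multiplicative (ZMod 5)))) = 10 := by
    intro u hu2 hu1
    rw [aux_card_prod, Nat.card_zpowers, orderOf_eq_prime hu2 hu1, Subgroup.card_top, hC]
  have hcard_Hu : ∀ u : A, u ^ 2 = 1 → u ≠ 1 →
      Nat.card (Subgroup.zpowers ((u, 1) : A × Multiplicative (ZMod 5))) = 2 := by
    intro u hu2 hu1
    rw [Nat.card_zpowers]
    refine orderOf_eq_prime (hpair2 u hu2) ?_
    intro hh
    exact hu1 (by simpa using congrArg Prod.fst hh)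
  have hMu_ne_top : ∀ u : A, u ^ 2 = 1 → u ≠ 1 →
      (Subgroup.zpowers u).prod (⊤ : Subgroup (Multiplicative (ZMod 5))) ≠ ⊤ := by
    intro u hu2 hu1 htop
    have hcm := hcard_Mu u hu2 hu1
    rw [htop, Subgroup.card_top, hG] at hcm
    norm_num at hcm
  have h_trap2 : ∀ u : A, u ^ 2 = 1 → u ≠ 1 →
      ¬ IsSubnormal (Subgroup.zpowers ((u, 1) : A × Multiplicative (ZMod 5))) := by
    intro u hu2 hu1
    apply aux_not_subnormal (M := (Subgroup.zpowers u).prod ⊤)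
    · exact Subgroup.zpowers_le.mpr
        (Subgroup.mem_prod.mpr ⟨Subgroup.mem_zpowers u, Subgroup.mem_top _⟩)
    · exact hMu_ne_top u hu2 hu1
    · intro K hHK hKM
      have hd1 : Nat.card K ∣ 10 := (hcard_Mu u hu2 hu1) ▸ Subgroup.card_dvd_of_le hKM
      have hd2 : 2 ∣ Nat.card K := (hcard_Hu u hu2 hu1) ▸ Subgroup.card_dvd_of_le hHK
      rcases aux_divisor10 hd1 hd2 with h | h
      · have hKe : Subgroup.zpowers ((u, 1) : A × Multiplicative (ZMod 5)) = K :=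
          aux_eq_of_le_of_card_le (Set.toFinite _) hHK
            (le_of_eq (by rw [h, hcard_Hu u hu2 hu1]))
        rw [← hKe]
        exact h_norm_Hu u hu2 hu1
      · have hKe : K = (Subgroup.zpowers u).prod ⊤ :=
          aux_eq_of_le_of_card_le (Set.toFinite _) hKM
            (le_of_eq (by rw [h, hcard_Mu u hu2 hu1]))
        rw [hKe]
        exact h_norm_Mu u hu2 hu1
  -- component analysis of elements of order 2 and 5
  have h_comp2 : ∀ g : A × Multiplicative (ZMod 5), orderOf g = 2 →
      g.1 ^ 2 = 1 ∧ g.1 ≠ 1 ∧ g = (g.1, 1) := by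
    intro g hord
    have hg2 : g ^ 2 = 1 := orderOf_dvd_iff_pow_eq_one.mp (by rw [hord])
    have hg1 : g ≠ 1 := by intro hh; rw [hh] at hord; simp at hord
    have hsnd : g.2 = 1 := by
      have hc2 : g.2 ^ 2 = 1 := by
        have := congrArg Prod.snd hg2; rwa [Prod.pow_snd, Prod.snd_one] at this
      have d1 : orderOf g.2 ∣ 2 := orderOf_dvd_of_pow_eq_one hc2
      have d2 : orderOf g.2 ∣ 5 := orderOf_dvd_of_pow_eq_one (hfive g.2)
      exact orderOf_eq_one_iff.mp
        (Nat.dvd_one.mp ((by norm_num : Nat.gcd 2 5 = 1) ▸ Nat.dvd_gcd d1 d2))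
    have hfst2 : g.1 ^ 2 = 1 := by
      have := congrArg Prod.fst hg2; rwa [Prod.pow_fst, Prod.fst_one] at this
    have hfst1 : g.1 ≠ 1 := by
      intro hh; exact hg1 (Prod.ext_iff.mpr ⟨hh, hsnd⟩)
    exact ⟨hfst2, hfst1, Prod.ext_iff.mpr ⟨rfl, hsnd⟩⟩
  have h_comp5 : ∀ g : A × Multiplicative (ZMod 5), orderOf g = 5 →
      g = (1, g.2) ∧ orderOf g.2 = 5 := by
    intro g hord
    have hg5 : g ^ 5 = 1 := orderOf_dvd_iff_pow_eq_one.mp (by rw [hord])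
    have hfst5 : g.1 ^ 5 = 1 := by
      have := congrArg Prod.fst hg5; rwa [Prod.pow_fst, Prod.fst_one] at this
    have d1 : orderOf g.1 ∣ 5 := orderOf_dvd_of_pow_eq_one hfst5
    have d2 : orderOf g.1 ∣ 6 := orderOf_dvd_of_pow_eq_one (hsix g.1)
    have hfst : g.1 = 1 := orderOf_eq_one_iff.mp
      (Nat.dvd_one.mp ((by norm_num : Nat.gcd 5 6 = 1) ▸ Nat.dvd_gcd d1 d2))
    have hsnd5 : g.2 ^ 5 = 1 := by
      have := congrArg Prod.snd hg5; rwa [Prod.pow_snd, Prod.snd_one] at this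
    have hsnd1 : g.2 ≠ 1 := by
      intro hh
      have hgg : g = 1 := Prod.ext_iff.mpr ⟨hfst, hh⟩
      rw [hgg] at hord
      simp at hord
    exact ⟨Prod.ext_iff.mpr ⟨hfst, rfl⟩, orderOf_eq_prime hsnd5 hsnd1⟩
  -- the normal subgroups used for classification
  obtain ⟨a3, ha3⟩ := exists_prime_orderOf_dvd_card' (G := A) 3 (by rw [hA]; norm_num)
  have hPcard : Nat.card (Subgroup.zpowers a3) = 3 := by rw [Nat.card_zpowers, ha3]
  have hPindex : (Subgroup.zpowers a3).index = 2 := by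
    have := Subgroup.card_mul_index (Subgroup.zpowers a3)
    rw [hPcard, hA] at this; omega
  have hPnormal : (Subgroup.zpowers a3).Normal := aux_normal_of_index_two hPindex
  haveI := hPnormal
  have hN1card : Nat.card ((⊤ : Subgroup A).prod (⊥ : Subgroup (Multiplicative (ZMod 5)))) = 6 := by
    rw [aux_card_prod, Subgroup.card_top, hA, Subgroup.card_bot, mul_one]
  have hN2card : Nat.card ((Subgroup.zpowers a3).prod (⊤ : Subgroup (Multiplicative (ZMod 5)))) = 15 := by
    rw [aux_card_prod, hPcard, Subgroup.card_top, hC]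
  have hN3card : Nat.card ((⊥ : Subgroup A).prod (⊤ : Subgroup (Multiplicative (ZMod 5)))) = 5 := by
    rw [aux_card_prod, Subgroup.card_bot, Subgroup.card_top, hC, one_mul]
  have hP1card : Nat.card ((Subgroup.zpowers a3).prod (⊥ : Subgroup (Multiplicative (ZMod 5)))) = 3 := by
    rw [aux_card_prod, hPcard, Subgroup.card_bot, mul_one]
  have hidx : ∀ N : Subgroup (A × Multiplicative (ZMod 5)), Nat.card N * N.index = 30 := by
    intro N; rw [← hG]; exact Subgroup.card_mul_index N
  have hN1index : ((⊤ : Subgroup A).prod (⊥ : Subgroup (Multiplicative (ZMod 5)))).index = 5 := by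
    have := hidx ((⊤ : Subgroup A).prod (⊥ : Subgroup (Multiplicative (ZMod 5))))
    rw [hN1card] at this; omega
  have hN2index : ((Subgroup.zpowers a3).prod (⊤ : Subgroup (Multiplicative (ZMod 5)))).index = 2 := by
    have := hidx ((Subgroup.zpowers a3).prod (⊤ : Subgroup (Multiplicative (ZMod 5))))
    rw [hN2card] at this; omega
  have hN3index : ((⊥ : Subgroup A).prod (⊤ : Subgroup (Multiplicative (ZMod 5)))).index = 6 := by
    have := hidx ((⊥ : Subgroup A).prod (⊤ : Subgroup (Multiplicative (ZMod 5))))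
    rw [hN3card] at this; omega
  have hN1normal : ((⊤ : Subgroup A).prod (⊥ : Subgroup (Multiplicative (ZMod 5)))).Normal :=
    inferInstance
  have hN2normal : ((Subgroup.zpowers a3).prod (⊤ : Subgroup (Multiplicative (ZMod 5)))).Normal :=
    inferInstance
  have hN3normal : ((⊥ : Subgroup A).prod (⊤ : Subgroup (Multiplicative (ZMod 5)))).Normal :=
    inferInstance
  have hP1normal : ((Subgroup.zpowers a3).prod (⊥ : Subgroup (Multiplicative (ZMod 5)))).Normal :=
    inferInstance
  -- `G` is a `T`-group
  have hT : IsTGroup (A × Multiplicative (ZMod 5)) := by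
    intro H hsub
    have hdvd : Nat.card H ∣ 30 := hG ▸ Subgroup.card_subgroup_dvd_card H
    rcases aux_divisor30 hdvd with h | h | h | h | h | h | h | h
    · rw [Subgroup.card_eq_one] at h
      rw [h]; infer_instance
    · -- order 2 : impossible (not subnormal)
      exfalso
      haveI : Nontrivial H := Finite.one_lt_card_iff_nontrivial.mp (by rw [h]; norm_num)
      obtain ⟨g, hgH, hg1⟩ := Subgroup.exists_ne_one_of_nontrivial H
      have hordvd : orderOf g ∣ 2 := h ▸ Subgroup.orderOf_dvd_natCard H hgH
      have hord : orderOf g = 2 := ((Nat.dvd_prime Nat.prime_two).mp hordvd).resolve_left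
        (fun h1 => hg1 (orderOf_eq_one_iff.mp h1))
      obtain ⟨hu2, hu1, hueq⟩ := h_comp2 g hord
      have hHeq : H = Subgroup.zpowers ((g.1, 1) : A × Multiplicative (ZMod 5)) := by
        rw [← hueq]
        symm
        apply aux_eq_of_le_of_card_le (Set.toFinite _) (Subgroup.zpowers_le.mpr hgH)
        exact le_of_eq (by rw [Nat.card_zpowers, hord, h])
      exact h_trap2 g.1 hu2 hu1 (hHeq ▸ hsub)
    · -- order 3
      have h1 : H ≤ (⊤ : Subgroup A).prod (⊥ : Subgroup (Multiplicative (ZMod 5))) :=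
        aux_le_of_coprime hN1normal (by rw [h, hN1index]; decide)
      have h2 : H ≤ (Subgroup.zpowers a3).prod (⊤ : Subgroup (Multiplicative (ZMod 5))) :=
        aux_le_of_coprime hN2normal (by rw [h, hN2index]; decide)
      have h3 : H ≤ (Subgroup.zpowers a3).prod (⊥ : Subgroup (Multiplicative (ZMod 5))) := by
        intro x hx
        have m1 := Subgroup.mem_prod.mp (h1 hx)
        have m2 := Subgroup.mem_prod.mp (h2 hx)
        exact Subgroup.mem_prod.mpr ⟨m2.1, m1.2⟩
      have hHe : H = (Subgroup.zpowers a3).prod (⊥ : Subgroup (Multiplicative (ZMod 5))) :=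
        aux_eq_of_le_of_card_le (Set.toFinite _) h3 (le_of_eq (by rw [h, hP1card]))
      rw [hHe]; exact hP1normal
    · -- order 5
      have h1 : H ≤ (⊥ : Subgroup A).prod (⊤ : Subgroup (Multiplicative (ZMod 5))) :=
        aux_le_of_coprime hN3normal (by rw [h, hN3index]; decide)
      have hHe : H = (⊥ : Subgroup A).prod (⊤ : Subgroup (Multiplicative (ZMod 5))) :=
        aux_eq_of_le_of_card_le (Set.toFinite _) h1 (le_of_eq (by rw [h, hN3card]))
      rw [hHe]; exact hN3normal
    · -- order 6
      have h1 : H ≤ (⊤ : Subgroup A).prod (⊥ : Subgroup (Multiplicative (ZMod 5))) :=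
        aux_le_of_coprime hN1normal (by rw [h, hN1index]; decide)
      have hHe : H = (⊤ : Subgroup A).prod (⊥ : Subgroup (Multiplicative (ZMod 5))) :=
        aux_eq_of_le_of_card_le (Set.toFinite _) h1 (le_of_eq (by rw [h, hN1card]))
      rw [hHe]; exact hN1normal
    · -- order 10 : impossible (not subnormal)
      exfalso
      obtain ⟨y, hy⟩ := exists_prime_orderOf_dvd_card' (G := ↥H) 2 (by rw [h]; norm_num)
      have hyo : orderOf ((y : A × Multiplicative (ZMod 5))) = 2 := by
        rw [Subgroup.orderOf_coe]; exact hy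
      obtain ⟨hu2, hu1, hueq⟩ := h_comp2 _ hyo
      obtain ⟨z, hz5⟩ := exists_prime_orderOf_dvd_card' (G := ↥H) 5 (by rw [h]; norm_num)
      have hzo : orderOf ((z : A × Multiplicative (ZMod 5))) = 5 := by
        rw [Subgroup.orderOf_coe]; exact hz5
      obtain ⟨hzeq, hzord⟩ := h_comp5 _ hzo
      have hcz : Subgroup.zpowers ((z : A × Multiplicative (ZMod 5)).2)
          = (⊤ : Subgroup (Multiplicative (ZMod 5))) :=
        aux_eq_of_le_of_card_le (Set.toFinite _) le_top
          (le_of_eq (by rw [Subgroup.card_top, hC, Nat.card_zpowers, hzord]))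
      have hmem_u : (((y : A × Multiplicative (ZMod 5)).1, 1) : A × Multiplicative (ZMod 5)) ∈ H := by
        rw [← hueq]; exact y.2
      have hmem_c : ((1, (z : A × Multiplicative (ZMod 5)).2) : A × Multiplicative (ZMod 5)) ∈ H := by
        rw [← hzeq]; exact z.2
      have hMle : (Subgroup.zpowers ((y : A × Multiplicative (ZMod 5)).1)).prod
          (⊤ : Subgroup (Multiplicative (ZMod 5))) ≤ H := by
        rintro ⟨p, q⟩ hpq
        obtain ⟨hp, -⟩ := Subgroup.mem_prod.mp hpq
        have hq : q ∈ Subgroup.zpowers ((z : A × Multiplicative (ZMod 5)).2) := by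
          rw [hcz]; exact Subgroup.mem_top q
        obtain ⟨k, hk⟩ := Subgroup.mem_zpowers_iff.mp hq
        rw [aux_mem_zpowers_iff_sq hu2] at hp
        have hmem1 : ((p, 1) : A × Multiplicative (ZMod 5)) ∈ H := by
          rcases hp with rfl | rfl
          · exact one_mem H
          · exact hmem_u
        have hmem2 : ((1, q) : A × Multiplicative (ZMod 5)) ∈ H := by
          have hzk := Subgroup.zpow_mem H hmem_c k
          have he : ((1, (z : A × Multiplicative (ZMod 5)).2) : A × Multiplicative (ZMod 5)) ^ k
              = (1, (z : A × Multiplicative (ZMod 5)).2 ^ k) :=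
            ((MonoidHom.inr A (Multiplicative (ZMod 5))).map_zpow
              ((z : A × Multiplicative (ZMod 5)).2) k).symm
          rw [he, hk] at hzk
          exact hzk
        have hsplit : ((p, q) : A × Multiplicative (ZMod 5)) = (p, 1) * (1, q) := by
          rw [Prod.mk_mul_mk, mul_one, one_mul]
        rw [hsplit]
        exact mul_mem hmem1 hmem2
      have hHeq : (Subgroup.zpowers ((y : A × Multiplicative (ZMod 5)).1)).prod
          (⊤ : Subgroup (Multiplicative (ZMod 5))) = H :=
        aux_eq_of_le_of_card_le (Set.toFinite _) hMle
          (le_of_eq (by rw [h, hcard_Mu _ hu2 hu1]))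
      refine aux_not_subnormal hHeq.ge (hMu_ne_top _ hu2 hu1) ?_ hsub
      intro K hHK hKM
      have hKe : K = (Subgroup.zpowers ((y : A × Multiplicative (ZMod 5)).1)).prod ⊤ :=
        le_antisymm hKM (hHeq.le.trans hHK)
      rw [hKe]
      exact h_norm_Mu _ hu2 hu1
    · -- order 15
      have h1 : H ≤ (Subgroup.zpowers a3).prod (⊤ : Subgroup (Multiplicative (ZMod 5))) :=
        aux_le_of_coprime hN2normal (by rw [h, hN2index]; decide)
      have hHe : H = (Subgroup.zpowers a3).prod (⊤ : Subgroup (Multiplicative (ZMod 5))) :=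
        aux_eq_of_le_of_card_le (Set.toFinite _) h1 (le_of_eq (by rw [h, hN2card]))
      rw [hHe]; exact hN2normal
    · -- order 30
      have hHe : H = (⊤ : Subgroup (A × Multiplicative (ZMod 5))) :=
        aux_eq_of_le_of_card_le (Set.toFinite _) le_top
          (le_of_eq (by rw [h, Subgroup.card_top, hG]))
      rw [hHe]; infer_instance
  -- the subgroup of order two witnessing failure of the `T_σ` property
  obtain ⟨u0, hu0⟩ := exists_prime_orderOf_dvd_card' (G := A) 2 (by rw [hA]; norm_num)
  have hu02 : u0 ^ 2 = 1 := by rw [← hu0]; exact pow_orderOf_eq_one u0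
  have hu01 : u0 ≠ 1 := by intro hh; rw [hh] at hu0; simp at hu0
  have hH0card : Nat.card (Subgroup.zpowers ((u0, 1) : A × Multiplicative (ZMod 5))) = 2 :=
    hcard_Hu u0 hu02 hu01
  have hH0nn : ¬ (Subgroup.zpowers ((u0, 1) : A × Multiplicative (ZMod 5))).Normal := by
    intro hn
    have hle : (⊤ : Subgroup (A × Multiplicative (ZMod 5))) ≤
        Subgroup.normalizer ((Subgroup.zpowers ((u0, 1) : A × Multiplicative (ZMod 5))) : Set (A × Multiplicative (ZMod 5))) :=
      le_of_eq (Subgroup.normalizer_eq_top_iff.mpr hn).symm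
    exact hMu_ne_top u0 hu02 hu01 (top_le_iff.mp (hle.trans (h_norm_Hu u0 hu02 hu01)))
  have hH0sub : IsSigmaSubnormal sigma6 (Subgroup.zpowers ((u0, 1) : A × Multiplicative (ZMod 5))) := by
    refine ⟨2, ![Subgroup.zpowers ((u0, 1) : A × Multiplicative (ZMod 5)),
      (⊤ : Subgroup A).prod (⊥ : Subgroup (Multiplicative (ZMod 5))), ⊤], rfl, rfl, ?_⟩
    intro k
    fin_cases k
    · constructor
      · show Subgroup.zpowers ((u0, 1) : A × Multiplicative (ZMod 5)) ≤
          (⊤ : Subgroup A).prod (⊥ : Subgroup (Multiplicative (ZMod 5)))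
        exact Subgroup.zpowers_le.mpr
          (Subgroup.mem_prod.mpr ⟨Subgroup.mem_top _, Subgroup.mem_bot.mpr rfl⟩)
      · refine Or.inr ⟨0, ?_⟩
        intro p hp hpd
        have hqd : Nat.card
            (↥((⊤ : Subgroup A).prod (⊥ : Subgroup (Multiplicative (ZMod 5)))) ⧸
              ((Subgroup.zpowers ((u0, 1) : A × Multiplicative (ZMod 5))).subgroupOf
                ((⊤ : Subgroup A).prod (⊥ : Subgroup (Multiplicative (ZMod 5))))).normalCore) ∣
            Nat.card ((⊤ : Subgroup A).prod (⊥ : Subgroup (Multiplicative (ZMod 5)))) :=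
          ⟨_, Subgroup.card_eq_card_quotient_mul_card_subgroup _⟩
        have hp6 : p ∣ 6 := by
          rw [← hN1card]
          exact dvd_trans hpd hqd
        have hple : p ≤ 6 := Nat.le_of_dvd (by norm_num) hp6
        have hp2 : 2 ≤ p := hp.two_le
        simp only [sigma6, Matrix.cons_val_zero, Set.mem_insert_iff, Set.mem_singleton_iff]
        interval_cases p <;> first | omega | (exact absurd hp (by norm_num))
    · exact ⟨le_top, Or.inl (hN1normal.subgroupOf ⊤)⟩
  exact ⟨hT, fun htσ => hH0nn (htσ _ hH0sub),
    ⟨Subgroup.zpowers ((u0, 1) : A × Multiplicative (ZMod 5)), hH0card, hH0sub, hH0nn⟩⟩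
end

section
/- Let σ be a partition of the set of all primes and let G be a finite σ-soluble group satisfying condition 𝔑R_{σ_i} for every member σ_i of σ. Then every Hall σ_i-subgroup of G (for every i) is a Dedekind group, and G is soluble. -/
/-! ### Auxiliary lemmas -/

section Aux

open Subgroup QuotientGroup

universe u

/-- A surjective image of a Dedekind group is Dedekind. -/
lemma IsDedekindGroup.of_surjective {G G' : Type*} [Group G] [Group G'] {f : G →* G'}
    (hf : Function.Surjective f) (h : IsDedekindGroup G) : IsDedekindGroup G' := by
  intro S
  have hn : ((S.comap f).map f).Normal := Subgroup.Normal.map (h (S.comap f)) f hf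
  rwa [Subgroup.map_comap_eq_self_of_surjective hf] at hn

/-- A subgroup of a Dedekind group (as ambient subgroups) is Dedekind. -/
lemma IsDedekindGroup.of_le {G : Type*} [Group G] {N H : Subgroup G} (h : N ≤ H)
    (hd : IsDedekindGroup H) : IsDedekindGroup N := by
  intro S
  constructor
  intro s hs n
  have hT : (S.map (Subgroup.inclusion h)).Normal := hd _
  have hsT : Subgroup.inclusion h s ∈ S.map (Subgroup.inclusion h) :=
    Subgroup.mem_map.mpr ⟨s, hs, rfl⟩
  have hconj := hT.conj_mem _ hsT (Subgroup.inclusion h n)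
  obtain ⟨y, hy, hy2⟩ := Subgroup.mem_map.mp hconj
  have : y = n * s * n⁻¹ := by
    apply Subgroup.inclusion_injective h
    rw [hy2]
    simp [map_mul, map_inv]
  rwa [this] at hy

/-- A finite Dedekind group is solvable. -/
lemma dedekind_isSolvable_aux :
    ∀ (n : ℕ) (G : Type u) [Group G] [Finite G], Nat.card G ≤ n → IsDedekindGroup G →
      IsSolvable G := by
  intro n
  induction n with
  | zero =>
    intro G _ _ hle _
    have := Nat.card_pos (α := G)
    omega
  | succ n ih =>
    intro G _ _ hle hD
    rcases subsingleton_or_nontrivial G with hs | hnt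
    · haveI := hs
      exact (inferInstance : Group.IsSolvable G)
    · obtain ⟨x, hx⟩ := exists_ne (1 : G)
      set A := Subgroup.zpowers x with hA
      haveI hAn : A.Normal := hD A
      have hA2 : 1 < Nat.card A := by
        rw [Subgroup.one_lt_card_iff_ne_bot]
        intro hbot
        have hxa : x ∈ A := Subgroup.mem_zpowers x
        rw [hbot] at hxa
        exact hx (Subgroup.mem_bot.mp hxa)
      have hmul : Nat.card A * Nat.card (G ⧸ A) = Nat.card G := by
        rw [← Subgroup.index_eq_card, Subgroup.card_mul_index]
      have hqpos : 0 < Nat.card (G ⧸ A) := Nat.card_pos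
      have hlt : Nat.card (G ⧸ A) < Nat.card G := by nlinarith
      have hDq : IsDedekindGroup (G ⧸ A) := hD.of_surjective (QuotientGroup.mk'_surjective A)
      haveI : Group.IsSolvable (G ⧸ A) := ih (G ⧸ A) (by omega) hDq
      haveI : Group.IsSolvable A := by
        apply isSolvable_of_comm
        rintro ⟨a, ha⟩ ⟨b, hb⟩
        obtain ⟨k, hk⟩ := Subgroup.mem_zpowers_iff.mp ha
        obtain ⟨l, hl⟩ := Subgroup.mem_zpowers_iff.mp hb
        ext
        show a * b = b * a
        rw [← hk, ← hl, ← zpow_add, ← zpow_add, add_comm]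
      exact solvable_of_ker_le_range A.subtype (QuotientGroup.mk' A)
        (by rw [QuotientGroup.ker_mk', Subgroup.range_subtype])

variable {ι : Type*} (σ : ι → Set ℕ)

/-- Transfer of σ-primariness along card equality. -/
lemma isSigmaPrimary_of_card_eq {G G' : Type*} [Group G] [Group G']
    (h : Nat.card G = Nat.card G') (hp : IsSigmaPrimary σ G) : IsSigmaPrimary σ G' := by
  obtain ⟨i, hi⟩ := hp
  exact ⟨i, fun p pp pd => hi p pp (h ▸ pd)⟩

/-- A minimal normal subgroup is σ-primary in a σ-soluble group. -/
lemma primary_of_minimal_normal {G : Type*} [Group G] (hsol : IsSigmaSolvable σ G)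
    {N : Subgroup G} (hNn : N.Normal) (hNne : N ≠ ⊥)
    (hmin : ∀ M : Subgroup G, M.Normal → M ≤ N → M = ⊥ ∨ M = N) :
    IsSigmaPrimary σ N := by
  have hcf : IsChiefFactor (⊥ : Subgroup G) N :=
    ⟨inferInstance, hNn, bot_lt_iff_ne_bot.mpr hNne,
      fun M hM _ hMN => hmin M hM hMN⟩
  have hprim := hsol ⊥ N hcf
  apply isSigmaPrimary_of_card_eq σ _ hprim
  rw [Subgroup.bot_subgroupOf, Subgroup.normalCore_eq_self, ← Subgroup.index_eq_card,
    Subgroup.index_bot]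

/-- Existence of a minimal normal subgroup. -/
lemma exists_minimal_normal (G : Type*) [Group G] [Finite G] [Nontrivial G] :
    ∃ N : Subgroup G, N.Normal ∧ N ≠ ⊥ ∧
      ∀ M : Subgroup G, M.Normal → M ≤ N → M = ⊥ ∨ M = N := by
  have htop : (⊤ : Subgroup G) ≠ ⊥ := by
    intro h
    obtain ⟨x, hx⟩ := exists_ne (1 : G)
    have hxmem : x ∈ (⊥ : Subgroup G) := h ▸ Subgroup.mem_top x
    exact hx (Subgroup.mem_bot.mp hxmem)
  obtain ⟨N, hNs, hmin⟩ := Set.exists_min_image {N : Subgroup G | N.Normal ∧ N ≠ ⊥}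
    (fun N => Nat.card N) (Set.toFinite _) ⟨⊤, inferInstance, htop⟩
  refine ⟨N, hNs.1, hNs.2, fun M hM hle => ?_⟩
  by_cases hMbot : M = ⊥
  · exact Or.inl hMbot
  · exact Or.inr (Subgroup.eq_of_le_of_card_ge hle (hmin M ⟨hM, hMbot⟩))

/-- Dichotomy for the primes of a σ-primary subgroup relative to a block `σ i`. -/
lemma primary_dichotomy (hcov : ∀ p : ℕ, p.Prime → ∃! i, p ∈ σ i)
    {G : Type*} [Group G] [Finite G] {N : Subgroup G}
    (hprim : IsSigmaPrimary σ N) (hNne : N ≠ ⊥) (i : ι) :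
    (∀ p : ℕ, p.Prime → p ∣ Nat.card N → p ∈ σ i) ∨
    (∀ p : ℕ, p.Prime → p ∣ Nat.card N → p ∉ σ i) := by
  obtain ⟨j, hj⟩ := hprim
  have h2 : Nat.card N ≠ 1 := by
    have := (Subgroup.one_lt_card_iff_ne_bot N).mpr hNne
    omega
  obtain ⟨q, qp, qd⟩ := Nat.exists_prime_and_dvd h2
  have hqj : q ∈ σ j := hj q qp qd
  by_cases hq : q ∈ σ i
  · left
    intro p pp pd
    have hij : i = j := (hcov q qp).unique hq hqj
    rw [hij]
    exact hj p pp pd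
  · right
    intro p pp pd hpi
    have hij : i = j := (hcov p pp).unique hpi (hj p pp pd)
    rw [hij] at hq
    exact hq hqj

section Quotient

variable {G : Type u} [Group G] [Finite G] (N : Subgroup G) [N.Normal]

lemma card_comap_mk (H' : Subgroup (G ⧸ N)) :
    Nat.card (H'.comap (QuotientGroup.mk' N)) = Nat.card N * Nat.card H' := by
  have h1 := Subgroup.card_mul_index (H'.comap (QuotientGroup.mk' N))
  have h2 := Subgroup.card_mul_index H'
  have h3 := Subgroup.card_mul_index N
  have h4 : (H'.comap (QuotientGroup.mk' N)).index = H'.index :=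
    Subgroup.index_comap_of_surjective _ (QuotientGroup.mk'_surjective N)
  have h5 : N.index = Nat.card (G ⧸ N) := Subgroup.index_eq_card N
  have h6 : H'.index ≠ 0 := Subgroup.index_ne_zero_of_finite
  have h7 : Nat.card (H'.comap (QuotientGroup.mk' N)) * H'.index =
      Nat.card N * Nat.card H' * H'.index := by
    rw [h4] at h1
    rw [h1, mul_assoc, h2, ← h5]
    exact h3.symm
  exact Nat.eq_of_mul_eq_mul_right (Nat.pos_of_ne_zero h6) h7

lemma ker_le_comap_mk (H' : Subgroup (G ⧸ N)) :
    N ≤ H'.comap (QuotientGroup.mk' N) := by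
  intro x hx
  have h1 : QuotientGroup.mk' N x = 1 := (QuotientGroup.eq_one_iff x).mpr hx
  exact Subgroup.mem_comap.mpr (by rw [h1]; exact H'.one_mem)

lemma hall_comap (π : Set ℕ) (hN : ∀ p : ℕ, p.Prime → p ∣ Nat.card N → p ∈ π)
    {H' : Subgroup (G ⧸ N)} (hH : IsHallPiSubgroup π H') :
    IsHallPiSubgroup π (H'.comap (QuotientGroup.mk' N)) := by
  constructor
  · intro p pp pd
    rw [card_comap_mk] at pd
    rcases (Nat.Prime.dvd_mul pp).mp pd with h | h
    · exact hN p pp h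
    · exact hH.1 p pp h
  · intro p pp pd
    rw [Subgroup.index_comap_of_surjective _ (QuotientGroup.mk'_surjective N)] at pd
    exact hH.2 p pp pd

lemma exists_complement_hall (π : Set ℕ)
    (hNout : ∀ p : ℕ, p.Prime → p ∣ Nat.card N → p ∉ π)
    {H' : Subgroup (G ⧸ N)} (hH : IsHallPiSubgroup π H') :
    ∃ C : Subgroup G, IsHallPiSubgroup π C ∧ C.map (QuotientGroup.mk' N) = H' := by
  set H : Subgroup G := H'.comap (QuotientGroup.mk' N) with hHdef
  have hNle : N ≤ H := ker_le_comap_mk N H'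
  set N' : Subgroup H := N.subgroupOf H with hN'def
  haveI hN'n : N'.Normal := Subgroup.Normal.subgroupOf ‹N.Normal› H
  have hcardN' : Nat.card N' = Nat.card N :=
    Nat.card_congr (Subgroup.subgroupOfEquivOfLe hNle).toEquiv
  have hcardH : Nat.card H = Nat.card N * Nat.card H' := card_comap_mk N H'
  have hNpos : 0 < Nat.card N := Nat.card_pos
  have hidxN' : N'.index = Nat.card H' := by
    have h := Subgroup.card_mul_index N'
    rw [hcardN', hcardH] at h
    exact Nat.eq_of_mul_eq_mul_left hNpos h
  have hcop : Nat.Coprime (Nat.card N') N'.index := by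
    rw [hcardN', hidxN']
    by_contra hcon
    obtain ⟨p, pp, p1, p2⟩ := Nat.Prime.not_coprime_iff_dvd.mp hcon
    exact hNout p pp p1 (hH.1 p pp p2)
  obtain ⟨C', hC'⟩ := Subgroup.exists_right_complement'_of_coprime hcop
  have hcardC' : Nat.card C' = Nat.card H' := by
    have h := Subgroup.card_mul_index C'
    rw [hC'.index_eq_card, hcardN', mul_comm, hcardH] at h
    exact Nat.eq_of_mul_eq_mul_left hNpos h
  have hCle : C'.map H.subtype ≤ H := Subgroup.map_subtype_le C'
  have hcardC : Nat.card (C'.map H.subtype) = Nat.card H' := by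
    rw [← hcardC']
    exact (Nat.card_congr (Subgroup.equivMapOfInjective C' H.subtype
      (Subgroup.subtype_injective H)).toEquiv).symm
  have hidxC : (C'.map H.subtype).index = Nat.card N * H'.index := by
    have h1 : (C'.map H.subtype).relIndex H * H.index = (C'.map H.subtype).index :=
      Subgroup.relIndex_mul_index hCle
    have h2 : (C'.map H.subtype).relIndex H = C'.index := by
      show ((C'.map H.subtype).subgroupOf H).index = C'.index
      rw [← Subgroup.comap_subtype,
        Subgroup.comap_map_eq_self_of_injective (Subgroup.subtype_injective H)]
    have h3 : H.index = H'.index :=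
      Subgroup.index_comap_of_surjective _ (QuotientGroup.mk'_surjective N)
    rw [← h1, h2, h3, hC'.index_eq_card, hcardN']
  refine ⟨C'.map H.subtype, ⟨?_, ?_⟩, ?_⟩
  · intro p pp pd
    rw [hcardC] at pd
    exact hH.1 p pp pd
  · intro p pp pd
    rw [hidxC] at pd
    rcases (Nat.Prime.dvd_mul pp).mp pd with h | h
    · exact hNout p pp h
    · exact hH.2 p pp h
  · apply le_antisymm
    · refine le_trans (Subgroup.map_mono hCle) ?_
      rw [hHdef, Subgroup.map_comap_eq_self_of_surjective (QuotientGroup.mk'_surjective N)]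
    · intro h' hh'
      obtain ⟨g, rfl⟩ := QuotientGroup.mk'_surjective N h'
      have hg : g ∈ H := Subgroup.mem_comap.mpr hh'
      obtain ⟨⟨n, c⟩, hnc⟩ := (hC'.existsUnique (⟨g, hg⟩ : H)).exists
      have hcoe : (n : H) * (c : H) = (⟨g, hg⟩ : H) := hnc
      have hgeq : ((n : H) : G) * ((c : H) : G) = g := by
        rw [← Subgroup.coe_mul, hcoe]
      have hnN : ((n : H) : G) ∈ N := n.2
      refine Subgroup.mem_map.mpr ⟨((c : H) : G), Subgroup.mem_map.mpr ⟨(c : H), c.2, rfl⟩, ?_⟩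
      have : QuotientGroup.mk' N ((n : H) : G) = 1 :=
        (QuotientGroup.eq_one_iff _).mpr hnN
      calc QuotientGroup.mk' N ((c : H) : G)
          = QuotientGroup.mk' N ((n : H) : G) * QuotientGroup.mk' N ((c : H) : G) := by
            rw [this, one_mul]
        _ = QuotientGroup.mk' N g := by rw [← map_mul, hgeq]

lemma sigmaSolvable_quotient {ι : Type*} (σ : ι → Set ℕ) (hsol : IsSigmaSolvable σ G) :
    IsSigmaSolvable σ (G ⧸ N) := by
  intro K' H' hcf
  obtain ⟨hK'n, hH'n, hlt, hmax⟩ := hcf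
  have hfs := QuotientGroup.mk'_surjective N
  set f := QuotientGroup.mk' N with hfdef
  set K : Subgroup G := K'.comap f with hKdef
  set H : Subgroup G := H'.comap f with hHdef
  haveI hKn : K.Normal := Subgroup.normal_comap f
  haveI hHn : H.Normal := Subgroup.normal_comap f
  have hNK : N ≤ K := ker_le_comap_mk N K'
  have hcf2 : IsChiefFactor K H := by
    refine ⟨hKn, hHn, lt_of_le_of_ne (Subgroup.comap_mono hlt.le) ?_, ?_⟩
    · intro h
      apply hlt.ne
      rw [← Subgroup.map_comap_eq_self_of_surjective hfs K',
        ← Subgroup.map_comap_eq_self_of_surjective hfs H', ← hKdef, ← hHdef, h]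
    · intro M hM h1 h2
      have hNM : N ≤ M := le_trans hNK h1
      have hkerM : f.ker ≤ M := by rw [QuotientGroup.ker_mk']; exact hNM
      have hmapK : K.map f = K' := Subgroup.map_comap_eq_self_of_surjective hfs K'
      have hmapH : H.map f = H' := Subgroup.map_comap_eq_self_of_surjective hfs H'
      rcases hmax (M.map f) (Subgroup.Normal.map hM f hfs)
          (hmapK ▸ Subgroup.map_mono h1) (hmapH ▸ Subgroup.map_mono h2) with h | h
      · left
        rw [← Subgroup.comap_map_eq_self hkerM, h, ← hKdef]
      · right
        rw [← Subgroup.comap_map_eq_self hkerM, h, ← hHdef]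
  have hprim := hsol K H hcf2
  haveI : (K.subgroupOf H).Normal := Subgroup.Normal.subgroupOf hKn H
  haveI : (K'.subgroupOf H').Normal := Subgroup.Normal.subgroupOf hK'n H'
  apply isSigmaPrimary_of_card_eq σ _ hprim
  rw [Subgroup.normalCore_eq_self, Subgroup.normalCore_eq_self,
    ← Subgroup.index_eq_card, ← Subgroup.index_eq_card]
  show K.relIndex H = K'.relIndex H'
  rw [hKdef, hHdef, Subgroup.relIndex_comap,
    Subgroup.map_comap_eq_self_of_surjective hfs]

end Quotient

section MainInduction

variable {ι : Type*} (σ : ι → Set ℕ)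

/-- Hall `σ i`-subgroups exist in finite σ-soluble groups. -/
lemma hall_exists (hcov : ∀ p : ℕ, p.Prime → ∃! i, p ∈ σ i) :
    ∀ (n : ℕ) (G : Type u) [Group G] [Finite G], Nat.card G ≤ n →
      IsSigmaSolvable σ G → ∀ i : ι, ∃ H : Subgroup G, IsHallPiSubgroup (σ i) H := by
  intro n
  induction n with
  | zero =>
    intro G _ _ hle _ _
    have := Nat.card_pos (α := G)
    omega
  | succ n ih =>
    intro G _ _ hle hsol i
    rcases subsingleton_or_nontrivial G with hs | hnt
    · refine ⟨⊥, fun p pp pd => ?_, fun p pp pd => ?_⟩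
      · rw [Subgroup.card_bot] at pd
        exact absurd (Nat.dvd_one.mp pd) pp.ne_one
      · haveI : Unique G := ⟨⟨1⟩, fun a => Subsingleton.elim a 1⟩
        rw [Subgroup.index_bot, Nat.card_unique] at pd
        exact absurd (Nat.dvd_one.mp pd) pp.ne_one
    · obtain ⟨N, hNn, hNne, hNmin⟩ := exists_minimal_normal G
      haveI := hNn
      have hNprim : IsSigmaPrimary σ N := primary_of_minimal_normal σ hsol hNn hNne hNmin
      have hN2 : 1 < Nat.card N := (Subgroup.one_lt_card_iff_ne_bot N).mpr hNne
      have hmul : Nat.card N * Nat.card (G ⧸ N) = Nat.card G := by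
        rw [← Subgroup.index_eq_card, Subgroup.card_mul_index]
      have hqpos : 0 < Nat.card (G ⧸ N) := Nat.card_pos
      have hqlt : Nat.card (G ⧸ N) < Nat.card G := by nlinarith
      have hsolq := sigmaSolvable_quotient N σ hsol
      obtain ⟨H', hH'⟩ := ih (G ⧸ N) (by omega) hsolq i
      rcases primary_dichotomy σ hcov hNprim hNne i with hin | hout
      · exact ⟨H'.comap (QuotientGroup.mk' N), hall_comap N (σ i) hin hH'⟩
      · obtain ⟨C, hC, -⟩ := exists_complement_hall N (σ i) hout hH'
        exact ⟨C, hC⟩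

/-- The Hall-Dedekind property descends to quotients by a minimal normal subgroup. -/
lemma HD_quotient (hcov : ∀ p : ℕ, p.Prime → ∃! i, p ∈ σ i)
    {G : Type u} [Group G] [Finite G] {N : Subgroup G} [N.Normal]
    (hNprim : IsSigmaPrimary σ N) (hNne : N ≠ ⊥)
    (hHD : ∀ i : ι, ∀ H : Subgroup G, IsHallPiSubgroup (σ i) H → IsDedekindGroup H) :
    ∀ i : ι, ∀ H' : Subgroup (G ⧸ N), IsHallPiSubgroup (σ i) H' → IsDedekindGroup H' := by
  intro i H' hH'
  rcases primary_dichotomy σ hcov hNprim hNne i with hin | hout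
  · have hHall := hall_comap N (σ i) hin hH'
    have hd := hHD i _ hHall
    have h2 : IsDedekindGroup ((H'.comap (QuotientGroup.mk' N)).map (QuotientGroup.mk' N)) :=
      hd.of_surjective (MonoidHom.subgroupMap_surjective _ _)
    rwa [Subgroup.map_comap_eq_self_of_surjective (QuotientGroup.mk'_surjective N)] at h2
  · obtain ⟨C, hC, hmap⟩ := exists_complement_hall N (σ i) hout hH'
    have hd := hHD i C hC
    have h2 : IsDedekindGroup (C.map (QuotientGroup.mk' N)) :=
      hd.of_surjective (MonoidHom.subgroupMap_surjective _ _)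
    rwa [hmap] at h2

/-- Main induction: σ-soluble + all Hall `σ i`-subgroups Dedekind implies soluble. -/
lemma main_solvable_aux (hcov : ∀ p : ℕ, p.Prime → ∃! i, p ∈ σ i) :
    ∀ (n : ℕ) (G : Type u) [Group G] [Finite G], Nat.card G ≤ n →
      IsSigmaSolvable σ G →
      (∀ i : ι, ∀ H : Subgroup G, IsHallPiSubgroup (σ i) H → IsDedekindGroup H) →
      IsSolvable G := by
  intro n
  induction n with
  | zero =>
    intro G _ _ hle _ _
    have := Nat.card_pos (α := G)
    omega
  | succ n ih =>
    intro G _ _ hle hsol hHD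
    rcases subsingleton_or_nontrivial G with hs | hnt
    · haveI := hs
      exact (inferInstance : Group.IsSolvable G)
    · obtain ⟨N, hNn, hNne, hNmin⟩ := exists_minimal_normal G
      haveI := hNn
      have hNprim : IsSigmaPrimary σ N := primary_of_minimal_normal σ hsol hNn hNne hNmin
      obtain ⟨i₀, hi₀⟩ := hNprim
      have hN2 : 1 < Nat.card N := (Subgroup.one_lt_card_iff_ne_bot N).mpr hNne
      have hmul : Nat.card N * Nat.card (G ⧸ N) = Nat.card G := by
        rw [← Subgroup.index_eq_card, Subgroup.card_mul_index]
      have hqpos : 0 < Nat.card (G ⧸ N) := Nat.card_pos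
      have hqlt : Nat.card (G ⧸ N) < Nat.card G := by nlinarith
      have hsolq := sigmaSolvable_quotient N σ hsol
      have hHDq := HD_quotient σ hcov ⟨i₀, hi₀⟩ hNne hHD
      haveI hQsolv : Group.IsSolvable (G ⧸ N) := ih (G ⧸ N) (by omega) hsolq hHDq
      -- N is contained in a Hall σ i₀-subgroup, which is Dedekind.
      obtain ⟨H', hH'⟩ := hall_exists σ hcov (Nat.card (G ⧸ N)) (G ⧸ N) le_rfl hsolq i₀
      have hH₀ : IsHallPiSubgroup (σ i₀) (H'.comap (QuotientGroup.mk' N)) :=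
        hall_comap N (σ i₀) hi₀ hH'
      have hNle : N ≤ H'.comap (QuotientGroup.mk' N) := ker_le_comap_mk N H'
      have hdN : IsDedekindGroup N := (hHD i₀ _ hH₀).of_le hNle
      haveI : Group.IsSolvable N := dedekind_isSolvable_aux (Nat.card N) N le_rfl hdN
      exact solvable_of_ker_le_range N.subtype (QuotientGroup.mk' N)
        (by rw [QuotientGroup.ker_mk', Subgroup.range_subtype])

/-- Hall π-subgroups are Dedekind under condition R. -/
lemma dedekind_of_conditionR {G : Type*} [Group G] {π : Set ℕ}
    (hR : ConditionR π G) (H : Subgroup G) (hH : IsHallPiSubgroup π H) :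
    IsDedekindGroup H := by
  intro S
  have hle : S.map H.subtype ≤ H := Subgroup.map_subtype_le S
  have hnorm := hR π subset_rfl H hH (S.map H.subtype) hle
  constructor
  intro s hs h
  have hsn : ((s : G)) ∈ (Subgroup.normalizer (H : Set G)) := Subgroup.le_normalizer s.2
  have hhn : ((h : G)) ∈ (Subgroup.normalizer (H : Set G)) := Subgroup.le_normalizer h.2
  have hs' : (⟨(s : G), hsn⟩ : (Subgroup.normalizer (H : Set G))) ∈ (S.map H.subtype).subgroupOf (Subgroup.normalizer (H : Set G)) :=
    Subgroup.mem_subgroupOf.mpr (Subgroup.mem_map.mpr ⟨s, hs, rfl⟩)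
  have hconj := hnorm.conj_mem _ hs' (⟨(h : G), hhn⟩ : (Subgroup.normalizer (H : Set G)))
  rw [Subgroup.mem_subgroupOf] at hconj
  obtain ⟨y, hy, hy2⟩ := Subgroup.mem_map.mp hconj
  have : y = h * s * h⁻¹ := by
    apply Subgroup.subtype_injective H
    rw [hy2]
    simp
  rwa [this] at hy

end MainInduction

end Aux

/-- If a finite σ-soluble group `G` satisfies `R_{σᵢ}` for all `i`, then
every Hall `σᵢ`-subgroup of `G` is a Dedekind group (for every `i`), and `G` is soluble. -/
theorem statement_9 {ι : Type*} (σ : ι → Set ℕ)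
    (hσ_prime : ∀ i, ∀ p ∈ σ i, Nat.Prime p)
    (hσ_cover : ∀ p : ℕ, p.Prime → ∃! i, p ∈ σ i)
    (G : Type*) [Group G] [Finite G]
    (hsol : IsSigmaSolvable σ G)
    (hR : ∀ i, ConditionR (σ i) G) :
    (∀ i, ∀ H : Subgroup G, IsHallPiSubgroup (σ i) H → IsDedekindGroup H) ∧
    IsSolvable G := by
  have hD : ∀ i, ∀ H : Subgroup G, IsHallPiSubgroup (σ i) H → IsDedekindGroup H :=
    fun i H hH => dedekind_of_conditionR (hR i) H hH
  exact ⟨hD, main_solvable_aux σ hσ_cover (Nat.card G) G le_rfl hsol hD⟩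
end

section
/- Let σ be a partition of the set of all primes and let G be a finite group satisfying condition 𝔑R_{σ_i} for every member σ_i of σ. If M is a Hall subgroup of G, then M satisfies condition 𝔑R_{σ_i} for every i, and the σ-nilpotent residual of M is contained in the σ-nilpotent residual of G, i.e., M^{𝔑_σ} ≤ G^{𝔑_σ}. -/
lemma IsSigmaNilpotent.exists_embedding {ι : Type*} {σ : ι → Set ℕ} {Q : Type*} [Group Q]
    [Finite Q] (h : IsSigmaNilpotent σ Q) :
    ∃ (n : ℕ) (H : Fin n → Subgroup Q) (c : Fin n → ι)
      (d : Q →* (∀ k : Fin n, ↥(H k))),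
      Function.Injective d ∧
      (∀ k, ∀ p : ℕ, p.Prime → p ∣ Nat.card (H k) → p ∈ σ (c k)) := by
  obtain ⟨n, H, hnorm, hprim, hind, hsup⟩ := h
  choose c hc using hprim
  have hdisj : Pairwise fun k k' => Disjoint (H k) (H k') := hind.pairwiseDisjoint
  have hcomm : Pairwise fun k k' : Fin n => ∀ x y : Q, x ∈ H k → y ∈ H k' → Commute x y :=
    fun k k' hkk' x y hx hy =>
      Subgroup.commute_of_normal_of_disjoint _ _ (hnorm k) (hnorm k') (hdisj hkk') x y hx hy
  let φ := Subgroup.noncommPiCoprod hcomm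
  have hinj : Function.Injective φ := Subgroup.injective_noncommPiCoprod_of_iSupIndep hind
  have hsurj : Function.Surjective φ := by
    rw [← MonoidHom.range_eq_top, Subgroup.noncommPiCoprod_range]
    exact hsup
  let e := MulEquiv.ofBijective φ ⟨hinj, hsurj⟩
  exact ⟨n, H, c, e.symm.toMonoidHom, e.symm.injective, hc⟩

lemma exists_EP {ι : Type*} {σ : ι → Set ℕ} {Q : Type*} [Group Q] [Finite Q]
    (h : IsSigmaNilpotent σ Q) (π₀ : Set ℕ)
    (hclosed : ∀ p q : ℕ, p.Prime → q.Prime → p ∈ π₀ → (∃ i, p ∈ σ i ∧ q ∈ σ i) → q ∈ π₀) :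
    ∃ E : Subgroup Q, E.Normal ∧
      ∀ x : Q, (x ∈ E ↔ ∀ p : ℕ, p.Prime → p ∣ orderOf x → p ∈ π₀) := by
  obtain ⟨n, H, c, d, hdinj, hcard⟩ := h.exists_embedding
  -- component order divides order
  have hcomp_dvd : ∀ (x : Q) (k), orderOf ((d x) k) ∣ orderOf x := by
    intro x k
    rw [orderOf_dvd_iff_pow_eq_one]
    have : (d x) ^ (orderOf x) = 1 := by
      rw [← map_pow, pow_orderOf_eq_one, map_one]
    exact congrFun this k
  have hexists : ∀ (x : Q) (p : ℕ), p.Prime → p ∣ orderOf x → ∃ k, p ∣ orderOf ((d x) k) := by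
    intro x p hp hpd
    have h1 : orderOf (d x) = orderOf x := orderOf_injective d hdinj x
    have h2 : orderOf (d x) ∣ ∏ k, orderOf ((d x) k) := by
      rw [orderOf_dvd_iff_pow_eq_one]
      funext k
      rw [Pi.pow_apply, Pi.one_apply, ← orderOf_dvd_iff_pow_eq_one]
      exact Finset.dvd_prod_of_mem _ (Finset.mem_univ k)
    have h3 : p ∣ ∏ k, orderOf ((d x) k) := (hpd.trans (h1 ▸ h2 : orderOf x ∣ _))
    obtain ⟨k, _, hk⟩ := (hp.prime.dvd_finset_prod_iff _).mp h3
    exact ⟨k, hk⟩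
  have hmul : ∀ x y : Q, (∀ p : ℕ, p.Prime → p ∣ orderOf x → p ∈ π₀) →
      (∀ p : ℕ, p.Prime → p ∣ orderOf y → p ∈ π₀) →
      ∀ q : ℕ, q.Prime → q ∣ orderOf (x * y) → q ∈ π₀ := by
    intro x y hx hy q hq hqd
    obtain ⟨k, hk⟩ := hexists _ q hq hqd
    rw [map_mul, Pi.mul_apply] at hk
    have hqσ : q ∈ σ (c k) :=
      hcard k q hq (hk.trans (orderOf_dvd_natCard _))
    have key : ∀ w : Q, (∀ p : ℕ, p.Prime → p ∣ orderOf w → p ∈ π₀) → (d w) k ≠ 1 → q ∈ π₀ := by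
      intro w hw hw1
      obtain ⟨p, hp, hpd⟩ := Nat.exists_prime_and_dvd (fun hc1 => hw1 (orderOf_eq_one_iff.mp hc1))
      have hpπ : p ∈ π₀ := hw p hp (hpd.trans (hcomp_dvd w k))
      have hpσ : p ∈ σ (c k) := hcard k p hp (hpd.trans (orderOf_dvd_natCard _))
      exact hclosed p q hp hq hpπ ⟨c k, hpσ, hqσ⟩
    by_cases hx1 : (d x) k = 1
    · by_cases hy1 : (d y) k = 1
      · rw [hx1, hy1, mul_one, orderOf_one, Nat.dvd_one] at hk
        exact absurd hk hq.ne_one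
      · exact key y hy hy1
    · exact key x hx hx1
  refine ⟨{ carrier := {x : Q | ∀ p : ℕ, p.Prime → p ∣ orderOf x → p ∈ π₀}
            one_mem' := by intro p hp hpd; rw [orderOf_one, Nat.dvd_one] at hpd
                           exact absurd hpd hp.ne_one
            mul_mem' := fun ha hb => hmul _ _ ha hb
            inv_mem' := by intro x hx p hp hpd; rw [orderOf_inv] at hpd; exact hx p hp hpd },
    ?_, fun x => Iff.rfl⟩
  constructor
  intro x hx g p hp hpd
  have hco : orderOf (g * x * g⁻¹) = orderOf x := by
    have := orderOf_injective (MulAut.conj g).toMonoidHom (MulAut.conj g).injective x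
    simpa [MulAut.conj_apply] using this
  exact hx p hp (hco ▸ hpd)

lemma mem_iSup_of_orderOf_primes {K : Type*} [Group K] [Finite K] {m : ℕ}
    (π : Fin m → Set ℕ) (T : Fin m → Subgroup K)
    (hT : ∀ j (x : K), (∀ p : ℕ, p.Prime → p ∣ orderOf x → p ∈ π j) → x ∈ T j)
    (hcov : ∀ p : ℕ, p.Prime → p ∣ Nat.card K → ∃ j, p ∈ π j)
    (x : K) : x ∈ ⨆ j, T j := by
  suffices h : ∀ (N : ℕ) (x : K), orderOf x = N → x ∈ ⨆ j, T j from h _ x rfl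
  intro N
  induction N using Nat.strong_induction_on with
  | _ N IH =>
    intro x hx
    rcases eq_or_ne N 1 with h1 | h1
    · have hx1 : x = 1 := orderOf_eq_one_iff.mp (hx.trans h1)
      rw [hx1]; exact one_mem _
    · obtain ⟨p, hp, hpd⟩ := Nat.exists_prime_and_dvd h1
      have hN0 : N ≠ 0 := by rw [← hx]; exact (orderOf_pos x).ne'
      obtain ⟨j₀, hj₀⟩ := hcov p hp ((hx ▸ hpd : p ∣ orderOf x).trans (orderOf_dvd_natCard x))
      set a := p ^ N.factorization p with ha
      set b := N / a with hb
      have hab : a * b = N := Nat.ordProj_mul_ordCompl_eq_self N p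
      have hcop : Nat.Coprime a b := Nat.Coprime.pow_left _ (Nat.coprime_ordCompl hp hN0)
      have ha1 : 1 < a := by
        have hk0 : N.factorization p ≠ 0 := by
          have := (Nat.Prime.dvd_iff_one_le_factorization hp hN0).mp hpd
          omega
        exact Nat.one_lt_pow hk0 hp.one_lt
      have hb0 : 0 < b := Nat.ordCompl_pos p hN0
      have hbN : b < N := by
        rcases Nat.lt_or_ge b N with h | h
        · exact h
        · exfalso
          have hbb : b = N := le_antisymm (Nat.le_of_dvd (Nat.pos_of_ne_zero hN0) ⟨a, by rw [← hab]; ring⟩) h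
          rw [hbb] at hab
          nlinarith [Nat.pos_of_ne_zero hN0]
      -- Bezout
      set u := Nat.gcdA a b with hu
      set v := Nat.gcdB a b with hv
      have hbez : (1 : ℤ) = a * u + b * v := by
        have := Nat.gcd_eq_gcd_ab a b
        rwa [Nat.Coprime.gcd_eq_one hcop] at this
      set y := x ^ ((b : ℤ) * v) with hy
      set z := x ^ ((a : ℤ) * u) with hz
      have hxN : x ^ ((N : ℤ)) = 1 := by
        rw [zpow_natCast, ← hx, pow_orderOf_eq_one]
      have hyT : y ∈ T j₀ := by
        apply hT j₀
        intro q hq hqd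
        have hya : y ^ a = 1 := by
          rw [hy, ← zpow_natCast, ← zpow_mul]
          have : (b : ℤ) * v * a = (N : ℤ) * v := by
            push_cast [← hab]; ring
          rw [this, zpow_mul, hxN, one_zpow]
        have : orderOf y ∣ a := orderOf_dvd_of_pow_eq_one hya
        have hqa : q ∣ a := hqd.trans this
        have hqp : q = p := by
          rw [ha] at hqa
          exact (Nat.prime_dvd_prime_iff_eq hq hp).mp (hq.dvd_of_dvd_pow hqa)
        rwa [hqp]
      have hzb : z ^ b = 1 := by
        rw [hz, ← zpow_natCast, ← zpow_mul]
        have : (a : ℤ) * u * b = (N : ℤ) * u := by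
          push_cast [← hab]; ring
        rw [this, zpow_mul, hxN, one_zpow]
      have hzS : z ∈ ⨆ j, T j := by
        have hzd : orderOf z ∣ b := orderOf_dvd_of_pow_eq_one hzb
        exact IH (orderOf z) (lt_of_le_of_lt (Nat.le_of_dvd hb0 hzd) hbN) z rfl
      have hxzy : x = z * y := by
        rw [hz, hy, ← zpow_add, ← hbez, zpow_one]
      rw [hxzy]
      exact mul_mem hzS (le_iSup T j₀ hyT)

lemma IsSigmaNilpotent.of_mulEquiv {ι : Type*} {σ : ι → Set ℕ} {A B : Type*} [Group A] [Group B]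
    (e : A ≃* B) (h : IsSigmaNilpotent σ A) : IsSigmaNilpotent σ B := by
  obtain ⟨n, H, hnorm, hprim, hind, hsup⟩ := h
  refine ⟨n, fun k => (H k).map e.toMonoidHom,
    fun k => (hnorm k).map _ e.surjective, fun k => ?_, ?_, ?_⟩
  · obtain ⟨i, hi⟩ := hprim k
    refine ⟨i, fun p hp hpd => hi p hp ?_⟩
    rwa [Nat.card_congr ((H k).equivMapOfInjective e.toMonoidHom e.injective).toEquiv]
  · intro k
    rw [disjoint_iff]
    have h2 : Subgroup.map e.toMonoidHom (⨆ (j) (_ : j ≠ k), H j)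
        = (⨆ (j) (_ : j ≠ k), (H j).map e.toMonoidHom) := by
      exact (Subgroup.map_iSup _ _).trans
        (iSup_congr fun j => Subgroup.map_iSup e.toMonoidHom fun _ : j ≠ k => H j)
    rw [← h2, ← Subgroup.map_inf _ _ _ e.injective, disjoint_iff.mp (hind k), Subgroup.map_bot]
  · rw [← Subgroup.map_iSup e.toMonoidHom H, hsup]
    exact Subgroup.map_top_of_surjective _ e.surjective

lemma IsSigmaNilpotent.subgroup {ι : Type*} {σ : ι → Set ℕ}
    (hσ_cover : ∀ p : ℕ, p.Prime → ∃! i, p ∈ σ i)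
    {Q : Type*} [Group Q] [Finite Q] (h : IsSigmaNilpotent σ Q) (S : Subgroup Q) :
    IsSigmaNilpotent σ ↥S := by
  classical
  obtain ⟨n, H, c, d, hdinj, hcard⟩ := h.exists_embedding
  -- the finite set of classes
  set J : Finset ι := Finset.image c Finset.univ with hJ
  set m : ℕ := J.card with hm
  set ev : Fin m → ι := fun j => ((J.equivFin.symm j : J) : ι) with hev
  have hev_inj : Function.Injective ev :=
    Subtype.coe_injective.comp J.equivFin.symm.injective
  have hev_surj : ∀ i ∈ J, ∃ j, ev j = i := fun i hi =>
    ⟨J.equivFin ⟨i, hi⟩, by simp [hev]⟩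
  -- uniqueness helper
  have huniq : ∀ {p : ℕ} {i i' : ι}, p.Prime → p ∈ σ i → p ∈ σ i' → i = i' := by
    intro p i i' hp h1 h2
    obtain ⟨i₀, -, hu⟩ := hσ_cover p hp
    exact (hu i h1).trans (hu i' h2).symm
  -- class subgroups
  have hEP : ∀ j : Fin m, ∃ E : Subgroup Q, E.Normal ∧
      ∀ x : Q, (x ∈ E ↔ ∀ p : ℕ, p.Prime → p ∣ orderOf x → p ∈ σ (ev j)) := by
    intro j
    refine exists_EP h (σ (ev j)) ?_
    rintro p q hp hq hpj ⟨i, hpi, hqi⟩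
    exact (huniq hp hpi hpj) ▸ hqi
  choose E hEnorm hEmem using hEP
  set T : Fin m → Subgroup ↥S := fun j => (E j).subgroupOf S with hT
  have hTmem : ∀ (j) (x : ↥S), x ∈ T j ↔ ∀ p : ℕ, p.Prime → p ∣ orderOf x → p ∈ σ (ev j) := by
    intro j x
    rw [hT, Subgroup.mem_subgroupOf, hEmem, Subgroup.orderOf_coe]
  refine ⟨m, T, fun j => (hEnorm j).subgroupOf S, fun j => ⟨ev j, ?_⟩, ?_, ?_⟩
  · -- σ-primary
    intro p hp hpd
    haveI : Fact p.Prime := ⟨hp⟩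
    obtain ⟨g, hg⟩ := exists_prime_orderOf_dvd_card' (G := ↥(T j)) p hpd
    have hg' : orderOf (g : ↥S) = p := by
      rw [Subgroup.orderOf_coe]; exact hg
    exact (hTmem j (g : ↥S)).mp g.2 p hp (hg' ▸ dvd_refl p)
  · -- independence
    intro j
    rw [Subgroup.disjoint_def]
    intro x hxj hxrest
    -- bound the rest by EP of the union
    have hcl : ∀ p q : ℕ, p.Prime → q.Prime → p ∈ {q : ℕ | ∃ j', j' ≠ j ∧ q ∈ σ (ev j')} →
        (∃ i, p ∈ σ i ∧ q ∈ σ i) → q ∈ {q : ℕ | ∃ j', j' ≠ j ∧ q ∈ σ (ev j')} := by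
      rintro p q hp hq ⟨j', hj', hpj'⟩ ⟨i, hpi, hqi⟩
      exact ⟨j', hj', (huniq hp hpi hpj') ▸ hqi⟩
    obtain ⟨F, -, hFmem⟩ := exists_EP h {q : ℕ | ∃ j', j' ≠ j ∧ q ∈ σ (ev j')} hcl
    have hle : (⨆ (j') (_ : j' ≠ j), T j') ≤ F.subgroupOf S := by
      refine iSup_le fun j' => iSup_le fun hj' y hy => ?_
      rw [Subgroup.mem_subgroupOf, hFmem]
      intro p hp hpd
      refine ⟨j', hj', ?_⟩
      exact (hTmem j' y).mp hy p hp (by rwa [← Subgroup.orderOf_coe])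
    have hxF := hle hxrest
    rw [Subgroup.mem_subgroupOf, hFmem] at hxF
    rw [hTmem] at hxj
    by_contra hx1
    have hxo : orderOf x ≠ 1 := fun hc => hx1 (orderOf_eq_one_iff.mp hc)
    obtain ⟨p, hp, hpd⟩ := Nat.exists_prime_and_dvd hxo
    have h1 : p ∈ σ (ev j) := hxj p hp hpd
    obtain ⟨j', hj', h2⟩ := hxF p hp (by rwa [Subgroup.orderOf_coe])
    exact hj' (hev_inj (huniq hp h2 h1))
  · -- sup = ⊤
    rw [eq_top_iff]
    intro s _
    refine mem_iSup_of_orderOf_primes (fun j => σ (ev j)) T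
      (fun j x hx => (hTmem j x).mpr hx) ?_ s
    intro p hp hpd
    have hpQ : p ∣ Nat.card Q := hpd.trans (Subgroup.card_subgroup_dvd_card S)
    haveI : Fact p.Prime := ⟨hp⟩
    obtain ⟨g, hg⟩ := exists_prime_orderOf_dvd_card' (G := Q) p hpQ
    have : ∃ k, p ∣ orderOf ((d g) k) := by
      have h1 : orderOf (d g) = orderOf g := orderOf_injective d hdinj g
      have h2 : orderOf (d g) ∣ ∏ k, orderOf ((d g) k) := by
        rw [orderOf_dvd_iff_pow_eq_one]
        funext k
        rw [Pi.pow_apply, Pi.one_apply, ← orderOf_dvd_iff_pow_eq_one]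
        exact Finset.dvd_prod_of_mem _ (Finset.mem_univ k)
      have h3 : p ∣ ∏ k, orderOf ((d g) k) := by
        rw [← hg]; exact (dvd_refl _).trans (h1 ▸ h2)
      obtain ⟨k, -, hk⟩ := (hp.prime.dvd_finset_prod_iff _).mp h3
      exact ⟨k, hk⟩
    obtain ⟨k, hk⟩ := this
    have hpσ : p ∈ σ (c k) := hcard k p hp (hk.trans (orderOf_dvd_natCard _))
    obtain ⟨j, hj⟩ := hev_surj (c k) (Finset.mem_image_of_mem c (Finset.mem_univ k))
    exact ⟨j, show p ∈ σ (ev j) by rw [hj]; exact hpσ⟩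

lemma residual_map_le {ι : Type*} (σ : ι → Set ℕ)
    (hσ_cover : ∀ p : ℕ, p.Prime → ∃! i, p ∈ σ i)
    (G : Type*) [Group G] [Finite G] (M : Subgroup G) :
    (sigmaNilpotentResidual σ M).map M.subtype ≤ sigmaNilpotentResidual σ G := by
  refine le_iInf fun N => le_iInf fun hN => ?_
  obtain ⟨hNn, hNq⟩ := hN
  haveI := hNn
  have hNc : N.normalCore = N := Subgroup.normalCore_eq_self N
  set φ : ↥M →* G ⧸ N.normalCore := (QuotientGroup.mk' N.normalCore).comp M.subtype with hφ
  have hker : φ.ker = N.subgroupOf M := by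
    rw [hφ, ← MonoidHom.comap_ker, QuotientGroup.ker_mk', hNc]
    rfl
  haveI : (N.subgroupOf M).Normal := hNn.subgroupOf M
  have hsub : IsSigmaNilpotent σ (↥M ⧸ (N.subgroupOf M).normalCore) := by
    have h1 : IsSigmaNilpotent σ ↥φ.range := IsSigmaNilpotent.subgroup hσ_cover hNq φ.range
    have h2 : IsSigmaNilpotent σ (↥M ⧸ φ.ker) :=
      IsSigmaNilpotent.of_mulEquiv (QuotientGroup.quotientKerEquivRange φ).symm h1
    have h3 : (N.subgroupOf M).normalCore = φ.ker := by
      rw [hker, Subgroup.normalCore_eq_self]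
    exact IsSigmaNilpotent.of_mulEquiv (QuotientGroup.quotientMulEquivOfEq h3.symm) h2
  have hle : sigmaNilpotentResidual σ ↥M ≤ N.subgroupOf M :=
    iInf₂_le (N.subgroupOf M) ⟨hNn.subgroupOf M, hsub⟩
  calc (sigmaNilpotentResidual σ ↥M).map M.subtype
      ≤ (N.subgroupOf M).map M.subtype := Subgroup.map_mono hle
    _ = N ⊓ M := Subgroup.subgroupOf_map_subtype N M
    _ ≤ N := inf_le_left

lemma conditionR_of_hall {G : Type*} [Group G] [Finite G] {σi : Set ℕ}
    (hRi : ConditionR σi G) (M : Subgroup G) {πM : Set ℕ} (hπM : IsHallPiSubgroup πM M) :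
    ConditionR σi ↥M := by
  intro π hπ H hH K hK
  set H' : Subgroup G := H.map M.subtype with hH'def
  set K' : Subgroup G := K.map M.subtype with hK'def
  have hH'M : H' ≤ M := Subgroup.map_subtype_le H
  have hcardH : Nat.card ↥H' = Nat.card ↥H :=
    (Nat.card_congr (H.equivMapOfInjective M.subtype M.subtype_injective).toEquiv).symm
  have hHall' : IsHallPiSubgroup (π ∩ πM) H' := by
    constructor
    · intro p hp hpd
      rw [hcardH] at hpd
      exact ⟨hH.1 p hp hpd, hπM.1 p hp (hpd.trans (Subgroup.card_subgroup_dvd_card H))⟩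
    · intro p hp hpd
      have hrel : H'.relIndex M = H.index := by
        rw [Subgroup.relIndex, hH'def]
        congr 1
        exact Subgroup.comap_map_eq_self_of_injective M.subtype_injective H
      have hidx : H'.relIndex M * M.index = H'.index := Subgroup.relIndex_mul_index hH'M
      rw [← hidx, hrel] at hpd
      rcases (Nat.Prime.dvd_mul hp).mp hpd with h | h
      · exact fun hmem => hH.2 p hp h hmem.1
      · exact fun hmem => hπM.2 p hp h hmem.2
  have hRres := hRi (π ∩ πM) (fun p hp => hπ hp.1) H' hHall' K' (Subgroup.map_mono hK)
  constructor
  intro x hx g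
  rw [Subgroup.mem_subgroupOf] at hx ⊢
  -- g normalizes H'
  have hgnorm : ((g : ↥M) : G) ∈ Subgroup.normalizer (H' : Set G) := by
    rw [Subgroup.mem_normalizer_iff]
    intro h
    constructor
    · rintro ⟨y, hy, rfl⟩
      refine ⟨(g : ↥M) * y * (g : ↥M)⁻¹, (Subgroup.mem_normalizer_iff.mp g.2 y).mp hy, ?_⟩
      simp [Subgroup.coe_subtype]
    · rintro ⟨z, hz, hzeq⟩
      refine ⟨(g : ↥M)⁻¹ * z * (g : ↥M), ?_, ?_⟩
      · refine (Subgroup.mem_normalizer_iff.mp g.2 _).mpr ?_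
        have : (g : ↥M) * ((g : ↥M)⁻¹ * z * (g : ↥M)) * (g : ↥M)⁻¹ = z := by group
        rwa [this]
      · have : (M.subtype z : G) = ↑(g : ↥M) * h * (↑(g : ↥M))⁻¹ := hzeq
        simp only [Subgroup.coe_subtype, Subgroup.coe_mul, Subgroup.coe_inv] at this ⊢
        rw [this]
        group
  have hxnorm : ((x : ↥M) : G) ∈ Subgroup.normalizer (H' : Set G) :=
    Subgroup.le_normalizer (Subgroup.mem_map_of_mem _ (hK hx))
  set g' : ↥(Subgroup.normalizer (H' : Set G)) := ⟨((g : ↥M) : G), hgnorm⟩ with hg'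
  set x' : ↥(Subgroup.normalizer (H' : Set G)) := ⟨((x : ↥M) : G), hxnorm⟩ with hx'
  have hx'K : x' ∈ K'.subgroupOf (Subgroup.normalizer (H' : Set G)) := by
    rw [Subgroup.mem_subgroupOf]
    exact Subgroup.mem_map_of_mem _ hx
  have hc := hRres.conj_mem x' hx'K g'
  rw [Subgroup.mem_subgroupOf] at hc
  have heq : (M.subtype ((g * x * g⁻¹ : ↥(Subgroup.normalizer (H : Set ↥M))) : ↥M) : G) = ↑↑g * ↑↑x * (↑↑g)⁻¹ := by
    simp [Subgroup.coe_subtype]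
  rw [← Subgroup.mem_map_iff_mem (f := M.subtype) M.subtype_injective (K := K), heq]
  exact hc

/-- If a finite group `G` satisfies `R_{σᵢ}` for all `i` and `M` is a Hall
subgroup of `G`, then `M` satisfies `R_{σᵢ}` for all `i`, and `M^{𝔑_σ} ≤ G^{𝔑_σ}`. -/
theorem statement_10 {ι : Type*} (σ : ι → Set ℕ)
    (hσ_prime : ∀ i, ∀ p ∈ σ i, Nat.Prime p)
    (hσ_cover : ∀ p : ℕ, p.Prime → ∃! i, p ∈ σ i)
    (G : Type*) [Group G] [Finite G]
    (hR : ∀ i, ConditionR (σ i) G)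
    (M : Subgroup G) (hM : ∃ π : Set ℕ, IsHallPiSubgroup π M) :
    (∀ i, ConditionR (σ i) M) ∧
    (sigmaNilpotentResidual σ M).map M.subtype ≤ sigmaNilpotentResidual σ G := by
  obtain ⟨πM, hπM⟩ := hM
  exact ⟨fun i => conditionR_of_hall (hR i) M hπM, residual_map_le σ hσ_cover G M⟩
end

section
/- Let σ be a partition of the set of all primes and let G be a finite soluble group satisfying condition 𝔑R_{σ_i} for every member σ_i of σ. If R is a minimal normal subgroup of G, then the quotient G/R also satisfies condition 𝔑R_{σ_i} for every i. -/
section Aux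
open Subgroup MulAction MulOpposite Pointwise


private theorem subgroup_eq_of_le_of_card_le {G : Type*} [Group G] [Finite G]
    {H K : Subgroup G} (h : H ≤ K) (hc : Nat.card K ≤ Nat.card H) : H = K := by
  have : (H : Set G) = (K : Set G) := by
    apply Set.eq_of_subset_of_ncard_le h _ (Set.toFinite _)
    rwa [← Nat.card_coe_set_eq, ← Nat.card_coe_set_eq]
  exact SetLike.coe_set_eq.mp this

section Conj

variable {G : Type*} [Group G] [Finite G] {R : Subgroup G} [R.Normal] [IsMulCommutative R]

private def mkQD (T : R.LeftTransversal) : R.QuotientDiff :=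
  Quotient.mk _ T

open scoped IsMulCommutative in
private theorem aux_eq_stabilizer (hco : Nat.Coprime (Nat.card R) R.index)
    {A : Subgroup G} (hA : IsComplement' R A) :
    A = stabilizer G (mkQD ⟨(A : Set G), hA.symm⟩) := by
  set T : R.LeftTransversal := ⟨(A : Set G), hA.symm⟩ with hT
  have hle : A ≤ stabilizer G (mkQD T) := by
    intro a ha
    show a • (mkQD T) = mkQD T
    have h1 : a • (mkQD T) = mkQD (op a⁻¹ • T) := rfl
    rw [h1]
    apply Quotient.sound
    show Subgroup.leftTransversals.diff (MonoidHom.id R) (op a⁻¹ • T) T = 1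
    unfold Subgroup.leftTransversals.diff
    apply Finset.prod_eq_one
    intro q _
    set s := (op a⁻¹ • T).2.leftQuotientEquiv q with hs
    set t := T.2.leftQuotientEquiv q with ht
    refine Subtype.ext ?_
    show (s : G)⁻¹ * (t : G) = 1
    have hmemR : (s : G)⁻¹ * (t : G) ∈ R := by
      refine QuotientGroup.leftRel_apply.mp (Quotient.exact' ?_)
      rw [Subgroup.IsComplement.quotientGroupMk_leftQuotientEquiv, Subgroup.IsComplement.quotientGroupMk_leftQuotientEquiv]
    have hsmem : (s : G) ∈ op a⁻¹ • (A : Set G) := s.2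
    obtain ⟨b, hbA, hb⟩ := hsmem
    have hsval : (s : G) = b * a⁻¹ := by
      rw [← hb]; show op a⁻¹ • b = b * a⁻¹; rw [op_smul_eq_mul]
    have htmem : (t : G) ∈ (A : Set G) := t.2
    have hmemA : (s : G)⁻¹ * (t : G) ∈ A := by
      rw [hsval, mul_inv_rev, inv_inv]
      exact A.mul_mem (A.mul_mem ha (A.inv_mem hbA)) htmem
    exact (Subgroup.disjoint_def.mp hA.disjoint hmemR hmemA)
  have hst : IsComplement' R (stabilizer G (mkQD T)) :=
    isComplement'_stabilizer_of_coprime hco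
  refine subgroup_eq_of_le_of_card_le hle ?_
  have h1 := hA.card_mul
  have h2 := hst.card_mul
  have hpos : 0 < Nat.card R := Nat.card_pos
  exact le_of_eq (Nat.eq_of_mul_eq_mul_left hpos (h2.trans h1.symm))

private theorem complement_conj (hco : Nat.Coprime (Nat.card R) R.index)
    {A B : Subgroup G} (hA : IsComplement' R A) (hB : IsComplement' R B) :
    ∃ r ∈ R, B = A.map (MulAut.conj r).toMonoidHom := by
  obtain ⟨r, hr⟩ := Subgroup.exists_smul_eq hco
    (mkQD ⟨(A : Set G), hA.symm⟩) (mkQD ⟨(B : Set G), hB.symm⟩)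
  refine ⟨(r : G), r.2, ?_⟩
  rw [aux_eq_stabilizer hco hB, aux_eq_stabilizer hco hA, ← hr]
  have h2 : (r • mkQD ⟨(A : Set G), hA.symm⟩)
      = ((r : G) • mkQD (R := R) ⟨(A : Set G), hA.symm⟩) := rfl
  rw [h2, MulAction.stabilizer_smul_eq_stabilizer_map_conj]

end Conj


section Rstruct
variable {G : Type*} [Group G] [Finite G] (R : Subgroup G) [R.Normal]

private theorem R_abelian (hsolv : IsSolvable G) (hbot : R ≠ ⊥)
    (hmin : ∀ N : Subgroup G, N.Normal → N ≤ R → N = ⊥ ∨ N = R) :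
    ∀ x ∈ R, ∀ y ∈ R, x * y = y * x := by
  rcases hmin ⁅R, R⁆ inferInstance (Subgroup.commutator_le_right R R) with h | h
  · intro x hx y hy
    have hc := Subgroup.commutator_mem_commutator hx hy
    rw [h, Subgroup.mem_bot] at hc
    exact (commutatorElement_eq_one_iff_mul_comm.mp hc)
  · exfalso
    have hmap : Subgroup.map R.subtype (commutator ↥R) = Subgroup.map R.subtype ⊤ := by
      rw [_root_.commutator_def, Subgroup.map_commutator, ← MonoidHom.range_eq_map,
        Subgroup.range_subtype, h]
    have hcomm : commutator ↥R = ⊤ := Subgroup.map_injective R.subtype_injective hmap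
    have hder : ∀ n, derivedSeries ↥R n = ⊤ := by
      intro n
      induction n with
      | zero => rfl
      | succ n ih => rw [derivedSeries_succ, ih, ← _root_.commutator_def, hcomm]
    obtain ⟨n, hn⟩ := (haveI : Group.IsSolvable G := hsolv; solvable_of_solvable_injective R.subtype_injective :
      Group.IsSolvable ↥R).solvable
    rw [hder n] at hn
    apply hbot
    rw [Subgroup.eq_bot_iff_forall]
    intro x hx
    have : (⟨x, hx⟩ : ↥R) ∈ (⊥ : Subgroup ↥R) := hn ▸ Subgroup.mem_top _
    simpa [Subgroup.mem_bot, Subtype.ext_iff] using this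

private theorem R_pgroup (hsolv : IsSolvable G) (hbot : R ≠ ⊥)
    (hmin : ∀ N : Subgroup G, N.Normal → N ≤ R → N = ⊥ ∨ N = R) :
    ∃ p : ℕ, p.Prime ∧ p ∣ Nat.card R ∧
      ∀ q : ℕ, q.Prime → q ∣ Nat.card R → q = p := by
  have habel := R_abelian R hsolv hbot hmin
  have hcard : 1 < Nat.card R := R.one_lt_card_iff_ne_bot.mpr hbot
  set p := (Nat.card R).minFac with hp
  have hpp : p.Prime := Nat.minFac_prime (by omega)
  have hpdvd : p ∣ Nat.card R := Nat.minFac_dvd _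
  refine ⟨p, hpp, hpdvd, ?_⟩
  haveI : Fact p.Prime := ⟨hpp⟩
  set S : Subgroup G := {
    carrier := {x | x ∈ R ∧ x ^ p = 1}
    one_mem' := ⟨R.one_mem, one_pow p⟩
    mul_mem' := fun {a b} ha hb => ⟨R.mul_mem ha.1 hb.1, by
      rw [Commute.mul_pow (habel a ha.1 b hb.1), ha.2, hb.2, one_mul]⟩
    inv_mem' := fun {a} ha => ⟨R.inv_mem ha.1, by rw [inv_pow, ha.2, inv_one]⟩ } with hSdef
  have hSnormal : S.Normal := by
    constructor
    intro x hx g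
    refine ⟨‹R.Normal›.conj_mem x hx.1 g, ?_⟩
    have hcj : (g * x * g⁻¹) ^ p = g * x ^ p * g⁻¹ := by
      rw [← MulAut.conj_apply, ← map_pow, MulAut.conj_apply]
    rw [hcj, hx.2, mul_one, mul_inv_cancel]
  have hSle : S ≤ R := fun x hx => hx.1
  obtain ⟨x, hxord⟩ := exists_prime_orderOf_dvd_card' (G := ↥R) p hpdvd
  have hxS : (x : G) ∈ S := by
    refine ⟨x.2, ?_⟩
    have hx1 : x ^ p = 1 := by rw [← hxord]; exact pow_orderOf_eq_one x
    exact_mod_cast congrArg (Subtype.val) hx1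
  have hSne : S ≠ ⊥ := by
    intro hS
    rw [hS, Subgroup.mem_bot] at hxS
    have : x = 1 := Subtype.ext hxS
    rw [this, orderOf_one] at hxord
    exact hpp.ne_one hxord.symm
  have hSR : S = R := (hmin S hSnormal hSle).resolve_left hSne
  intro q hq hqdvd
  haveI : Fact q.Prime := ⟨hq⟩
  obtain ⟨y, hyord⟩ := exists_prime_orderOf_dvd_card' (G := ↥R) q hqdvd
  have hyS : (y : G) ∈ S := by rw [hSR]; exact y.2
  have hdvd : orderOf (y : G) ∣ p := orderOf_dvd_of_pow_eq_one hyS.2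
  rw [Subgroup.orderOf_coe, hyord] at hdvd
  exact (Nat.prime_dvd_prime_iff_eq hq hpp).mp hdvd

end Rstruct

private theorem normal_subgroupOf_of_conj {Q : Type*} [Group Q] {K N : Subgroup Q}
    (h : ∀ g ∈ N, ∀ k ∈ K, g * k * g⁻¹ ∈ K) : (K.subgroupOf N).Normal := by
  constructor
  rintro ⟨k, hkN⟩ hk ⟨g, hgN⟩
  simp only [Subgroup.mem_subgroupOf, Subgroup.coe_mul, InvMemClass.coe_inv] at hk ⊢
  exact h g hgN k hk

private theorem conj_mem_of_normal_subgroupOf {Q : Type*} [Group Q] {K H : Subgroup Q}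
    (hKH : K ≤ H) (hN : (K.subgroupOf (Subgroup.normalizer (H : Set Q))).Normal)
    {g k : Q} (hg : g ∈ Subgroup.normalizer (H : Set Q)) (hk : k ∈ K) : g * k * g⁻¹ ∈ K := by
  have hkN : k ∈ Subgroup.normalizer (H : Set Q) := Subgroup.le_normalizer (hKH hk)
  have := hN.conj_mem ⟨k, hkN⟩ (by simpa [Subgroup.mem_subgroupOf] using hk) ⟨g, hg⟩
  simpa [Subgroup.mem_subgroupOf] using this

private theorem mem_map_conj_iff {Q : Type*} [Group Q] {H : Subgroup Q} {x y : Q} :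
    y ∈ H.map (MulAut.conj x).toMonoidHom ↔ x⁻¹ * y * x ∈ H := by
  simp only [Subgroup.mem_map, MulEquiv.coe_toMonoidHom, MulAut.conj_apply]
  constructor
  · rintro ⟨h, hh, rfl⟩
    have : x⁻¹ * (x * h * x⁻¹) * x = h := by group
    rwa [this]
  · intro h
    exact ⟨x⁻¹ * y * x, h, by group⟩

private theorem mem_normalizer_comap {G Q : Type*} [Group G] [Group Q] (φ : G →* Q)
    {Hbar : Subgroup Q} {g : G} (hg : φ g ∈ Subgroup.normalizer (Hbar : Set Q)) :
    g ∈ Subgroup.normalizer ((Subgroup.comap φ Hbar : Subgroup G) : Set G) := by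
  rw [Subgroup.mem_normalizer_iff] at hg ⊢
  intro h
  rw [Subgroup.mem_comap, Subgroup.mem_comap, map_mul, map_mul, map_inv]
  exact hg (φ h)


end Aux

/-- If a finite soluble group `G` satisfies `R_{σᵢ}` for all `i` and `R`
is a minimal normal subgroup of `G`, then `G/R` also satisfies `R_{σᵢ}` for all `i`. -/
theorem statement_11 {ι : Type*} (σ : ι → Set ℕ)
    (hσ_prime : ∀ i, ∀ p ∈ σ i, Nat.Prime p)
    (hσ_cover : ∀ p : ℕ, p.Prime → ∃! i, p ∈ σ i)
    (G : Type*) [Group G] [Finite G] (hsolv : IsSolvable G)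
    (hR : ∀ i, ConditionR (σ i) G)
    (R : Subgroup G) [R.Normal] (hbot : R ≠ ⊥)
    (hmin : ∀ N : Subgroup G, N.Normal → N ≤ R → N = ⊥ ∨ N = R) :
    ∀ i, ConditionR (σ i) (G ⧸ R) := by
  intro i π hπ Hbar hHall Kbar hKbar
  set φ := QuotientGroup.mk' R with hφdef
  have hφs : Function.Surjective φ := QuotientGroup.mk'_surjective R
  obtain ⟨p, hpp, hpdvd, hponly⟩ := R_pgroup R hsolv hbot hmin
  have habel := R_abelian R hsolv hbot hmin
  set H' := Subgroup.comap φ Hbar with hH'def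
  have hRH' : R ≤ H' := by
    intro r hr
    show φ r ∈ Hbar
    have h1 : φ r = 1 := (QuotientGroup.eq_one_iff r).mpr hr
    rw [h1]; exact Hbar.one_mem
  have hcardG : Nat.card G = Nat.card (G ⧸ R) * Nat.card R :=
    Subgroup.card_eq_card_quotient_mul_card_subgroup R
  have hindex : H'.index = Hbar.index := Subgroup.index_comap_of_surjective Hbar hφs
  have hHbarcard : Nat.card Hbar * Hbar.index = Nat.card (G ⧸ R) := Hbar.card_mul_index
  have hH'card : Nat.card H' * H'.index = Nat.card G := H'.card_mul_index
  have hindpos : 0 < Hbar.index := Nat.pos_of_ne_zero Subgroup.index_ne_zero_of_finite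
  have hcardR : 0 < Nat.card R := Nat.card_pos
  have hcardH' : Nat.card H' = Nat.card Hbar * Nat.card R := by
    refine Nat.eq_of_mul_eq_mul_right hindpos ?_
    calc Nat.card H' * Hbar.index = Nat.card H' * H'.index := by rw [hindex]
    _ = Nat.card (G ⧸ R) * Nat.card R := by rw [hH'card, hcardG]
    _ = Nat.card Hbar * Hbar.index * Nat.card R := by rw [hHbarcard]
    _ = Nat.card Hbar * Nat.card R * Hbar.index := by ring
  by_cases hpπ : p ∈ π
  · -- Case p ∈ π : the preimage H' is a Hall π-subgroup of G
    have hHallH' : IsHallPiSubgroup π H' := by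
      constructor
      · intro q hq hqdvd
        rw [hcardH'] at hqdvd
        rcases (Nat.Prime.dvd_mul hq).mp hqdvd with h | h
        · exact hHall.1 q hq h
        · rw [hponly q hq h]; exact hpπ
      · intro q hq hqdvd
        rw [hindex] at hqdvd
        exact hHall.2 q hq hqdvd
    have hKH' : Subgroup.comap φ Kbar ≤ H' := Subgroup.comap_mono hKbar
    have hN := hR i π hπ H' hHallH' (Subgroup.comap φ Kbar) hKH'
    apply normal_subgroupOf_of_conj
    intro gbar hgbar kbar hkbar
    obtain ⟨g, rfl⟩ := hφs gbar
    obtain ⟨k, rfl⟩ := hφs kbar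
    have hgN : g ∈ Subgroup.normalizer (H' : Set G) := mem_normalizer_comap φ hgbar
    have hkK : k ∈ Subgroup.comap φ Kbar := hkbar
    have hconj := conj_mem_of_normal_subgroupOf hKH' hN hgN hkK
    show φ g * φ k * (φ g)⁻¹ ∈ Kbar
    rw [← map_inv, ← map_mul, ← map_mul]
    exact hconj
  · -- Case p ∉ π
    set R' := R.subgroupOf H' with hR'def
    haveI hR'norm : R'.Normal := Subgroup.normal_subgroupOf
    haveI hR'comm : IsMulCommutative R' := by
      refine ⟨⟨fun a b => ?_⟩⟩
      apply Subtype.ext; apply Subtype.ext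
      show ((a : ↥H') : G) * ((b : ↥H') : G) = ((b : ↥H') : G) * ((a : ↥H') : G)
      exact habel _ a.2 _ b.2
    have hcardR' : Nat.card R' = Nat.card R :=
      Nat.card_congr (Subgroup.subgroupOfEquivOfLe hRH').toEquiv
    have hR'index : R'.index = Nat.card Hbar := by
      have h1 : Nat.card R' * R'.index = Nat.card H' := R'.card_mul_index
      rw [hcardR'] at h1
      refine Nat.eq_of_mul_eq_mul_left hcardR ?_
      rw [h1, hcardH']; ring
    have hco : Nat.Coprime (Nat.card R') R'.index := by
      rw [hcardR', hR'index]
      rw [Nat.coprime_iff_gcd_eq_one]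
      by_contra hg
      obtain ⟨q, hq, hqd⟩ := Nat.exists_prime_and_dvd hg
      have h1 : q = p := hponly q hq (hqd.trans (Nat.gcd_dvd_left _ _))
      exact hpπ (h1 ▸ hHall.1 q hq (hqd.trans (Nat.gcd_dvd_right _ _)))
    obtain ⟨Hhat, hHhat⟩ := Subgroup.exists_right_complement'_of_coprime hco
    set H : Subgroup G := Hhat.map H'.subtype with hHdef
    have hHle : H ≤ H' := Subgroup.map_subtype_le Hhat
    have hcardHhat : Nat.card H = Nat.card Hhat :=
      (Nat.card_congr (Subgroup.equivMapOfInjective Hhat H'.subtype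
        H'.subtype_injective).toEquiv).symm
    have hcardH : Nat.card H = Nat.card Hbar := by
      have h1 : Nat.card R' * Nat.card Hhat = Nat.card H' := hHhat.card_mul
      rw [hcardHhat]
      refine Nat.eq_of_mul_eq_mul_left hcardR ?_
      rw [← hcardR'] at hcardH' ⊢
      calc Nat.card R' * Nat.card Hhat = Nat.card H' := h1
      _ = Nat.card Hbar * Nat.card R' := hcardH'
      _ = Nat.card R' * Nat.card Hbar := by ring
    -- map φ H = Hbar
    have hmapH : Subgroup.map φ H = Hbar := by
      apply le_antisymm
      · rw [Subgroup.map_le_iff_le_comap]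
        exact hHle
      · intro kbar hk
        obtain ⟨x, rfl⟩ := hφs kbar
        have hxH' : x ∈ H' := hk
        obtain ⟨⟨a, b⟩, hab⟩ := hHhat.2 ⟨x, hxH'⟩
        have hx : ((a : ↥H') : G) * ((b : ↥H') : G) = x := by
          have := congrArg (fun z : ↥H' => (z : G)) hab
          simpa using this
        have hφa : φ ((a : ↥H') : G) = 1 := (QuotientGroup.eq_one_iff _).mpr a.2
        refine ⟨((b : ↥H') : G), ⟨(b : ↥H'), b.2, rfl⟩, ?_⟩
        rw [← hx, map_mul, hφa, one_mul]
    have hHallH : IsHallPiSubgroup π H := by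
      constructor
      · intro q hq hqdvd
        rw [hcardH] at hqdvd
        exact hHall.1 q hq hqdvd
      · intro q hq hqdvd
        have hsub : H.subgroupOf H' = Hhat :=
          Subgroup.comap_map_eq_self_of_injective H'.subtype_injective Hhat
        have hrel : H.relIndex H' * H'.index = H.index := Subgroup.relIndex_mul_index hHle
        have hrel2 : H.relIndex H' = Nat.card R' := by
          rw [Subgroup.relIndex, hsub, hHhat.index_eq_card]
        rw [← hrel, hrel2, hcardR', hindex] at hqdvd
        rcases (Nat.Prime.dvd_mul hq).mp hqdvd with h | h
        · rw [hponly q hq h]; exact hpπ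
        · exact hHall.2 q hq h
    set K : Subgroup G := Subgroup.comap φ Kbar ⊓ H with hKdef
    have hKH : K ≤ H := inf_le_right
    have hN := hR i π hπ H hHallH K hKH
    have hmapK : Subgroup.map φ K = Kbar := by
      apply le_antisymm
      · intro y hy
        obtain ⟨x, hx, rfl⟩ := hy
        exact hx.1
      · intro kbar hk
        have : kbar ∈ Subgroup.map φ H := hmapH ▸ hKbar hk
        obtain ⟨h, hh, rfl⟩ := this
        exact ⟨h, ⟨hk, hh⟩, rfl⟩
    apply normal_subgroupOf_of_conj
    intro gbar hgbar kbar hkbar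
    obtain ⟨g, rfl⟩ := hφs gbar
    have hgN' : g ∈ Subgroup.normalizer (H' : Set G) := mem_normalizer_comap φ hgbar
    -- H conjugated by g is another complement of R' in H'
    have hHgle : H.map (MulAut.conj g).toMonoidHom ≤ H' := by
      intro y hy
      obtain ⟨h, hh, rfl⟩ := hy
      show g * h * g⁻¹ ∈ H'
      exact ((Subgroup.mem_normalizer_iff.mp hgN') h).mp (hHle hh)
    set B : Subgroup ↥H' := (H.map (MulAut.conj g).toMonoidHom).subgroupOf H' with hBdef
    have hcardB : Nat.card B = Nat.card Hbar := by
      have e1 := Nat.card_congr (Subgroup.subgroupOfEquivOfLe hHgle).toEquiv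
      have e2 := Nat.card_congr (Subgroup.equivMapOfInjective H
        (MulAut.conj g).toMonoidHom (MulAut.conj g).injective).toEquiv
      rw [hBdef]
      calc Nat.card ((H.map (MulAut.conj g).toMonoidHom).subgroupOf H')
          = Nat.card (H.map (MulAut.conj g).toMonoidHom) := e1
      _ = Nat.card H := e2.symm
      _ = Nat.card Hbar := hcardH
    have hBcompl : Subgroup.IsComplement' R' B := by
      apply Subgroup.isComplement'_of_coprime
      · rw [hcardB, hcardR', hcardH']; ring
      · rw [hcardB, hcardR']
        rw [hcardR', hR'index] at hco
        exact hco
    obtain ⟨r', hr'R, hBeq⟩ := complement_conj hco hHhat hBcompl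
    set r : G := ((r' : ↥H') : G) with hrdef
    have hrR : r ∈ R := hr'R
    -- push the equation B = Hhat.map (conj r') down to G
    have hmapB : B.map H'.subtype = H.map (MulAut.conj g).toMonoidHom := by
      rw [hBdef, Subgroup.subgroupOf_map_subtype, inf_eq_left.mpr hHgle]
    have hmapB' : (Hhat.map (MulAut.conj r').toMonoidHom).map H'.subtype
        = H.map (MulAut.conj r).toMonoidHom := by
      rw [Subgroup.map_map, hHdef, Subgroup.map_map]
      congr 1
    have hconjHr : H.map (MulAut.conj g).toMonoidHom = H.map (MulAut.conj r).toMonoidHom := by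
      rw [← hmapB, hBeq, hmapB']
    set n : G := r⁻¹ * g with hndef
    have hnN : n ∈ Subgroup.normalizer (H : Set G) := by
      rw [Subgroup.mem_normalizer_iff]
      intro h
      have e1 : h ∈ H ↔ g * h * g⁻¹ ∈ H.map (MulAut.conj g).toMonoidHom := by
        rw [mem_map_conj_iff]
        constructor
        · intro hh; have : g⁻¹ * (g * h * g⁻¹) * g = h := by group
          rwa [this]
        · intro hh; have : g⁻¹ * (g * h * g⁻¹) * g = h := by group
          rwa [this] at hh
      have e2 : g * h * g⁻¹ ∈ H.map (MulAut.conj r).toMonoidHom ↔ n * h * n⁻¹ ∈ H := by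
        rw [mem_map_conj_iff]
        have : r⁻¹ * (g * h * g⁻¹) * r = n * h * n⁻¹ := by rw [hndef]; group
        rw [this]
      rw [e1, hconjHr, e2]
    obtain ⟨k, hkK, rfl⟩ := (hmapK ▸ hkbar : kbar ∈ Subgroup.map φ K)
    have hφr : φ r = 1 := (QuotientGroup.eq_one_iff r).mpr hrR
    have hnkn : n * k * n⁻¹ ∈ K := conj_mem_of_normal_subgroupOf hKH hN hnN hkK
    have hgkg : g * k * g⁻¹ = r * (n * k * n⁻¹) * r⁻¹ := by rw [hndef]; group
    show φ g * φ k * (φ g)⁻¹ ∈ Kbar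
    have : φ g * φ k * (φ g)⁻¹ = φ (n * k * n⁻¹) := by
      rw [← map_inv, ← map_mul, ← map_mul, hgkg, map_mul, map_mul, hφr, map_inv, hφr,
        one_mul, inv_one, mul_one]
    rw [this, ← hmapK]
    exact ⟨n * k * n⁻¹, hnkn, rfl⟩
end
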